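/- arXiv:1810.13246 — 8 statements merged into one kernel-verified Lean document; each statement's English description precedes it below -/
import Mathlib

section
/- Let 𝒳 and 𝒴 be finite sets and let π be a pmf on 𝒳 × 𝒴 with marginals π_X and π_Y. Then 𝓗(π_X, π_Y ‖ π) ≥ H(π), and equality holds if and only if π(x,y) = π_X(x)·π_Y(y) for all (x,y) ∈ 𝒳 × 𝒴. -/
open scoped BigOperators

/-- `log(1/t)` with values in the extended reals: `+∞` when `t = 0`. -/
noncomputable def negLogE (t : ℝ) : EReal :=
  if t = 0 then (⊤ : EReal) else ((Real.log t⁻¹ : ℝ) : EReal)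

/-- `Q` is a coupling of the pmfs `PX` and `PY`. -/
def IsCoupling {X Y : Type*} [Fintype X] [Fintype Y]
    (PX : X → ℝ) (PY : Y → ℝ) (Q : X × Y → ℝ) : Prop :=
  (∀ p, 0 ≤ Q p) ∧ (∀ x, ∑ y, Q (x, y) = PX x) ∧ (∀ y, ∑ x, Q (x, y) = PY y)

/-- The maximal cross-entropy `𝓗(PX, PY ‖ π)`, with values in the extended reals. -/
noncomputable def maxCrossEnt {X Y : Type*} [Fintype X] [Fintype Y]
    (PX : X → ℝ) (PY : Y → ℝ) (π : X × Y → ℝ) : EReal :=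
  sSup {s : EReal | ∃ Q, IsCoupling PX PY Q ∧
    s = ∑ p : X × Y, (Q p : EReal) * negLogE (π p)}

/-- Shannon entropy `H(P) = ∑ P(x) log(1/P(x))` (with `0 · log (1/0) = 0`). -/
noncomputable def entropy {X : Type*} [Fintype X] (P : X → ℝ) : ℝ :=
  ∑ x, P x * Real.log (P x)⁻¹

lemma coe_fsum {ι : Type*} (s : Finset ι) (f : ι → ℝ) :
    ((∑ i ∈ s, f i : ℝ) : EReal) = ∑ i ∈ s, ((f i : ℝ) : EReal) :=
  map_sum (⟨⟨Real.toEReal, EReal.coe_zero⟩, EReal.coe_add⟩ : ℝ →+ EReal) f s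

lemma gibbs_term {p q : ℝ} (hp : 0 ≤ p) (hq : 0 ≤ q) (hac : p ≠ 0 → q ≠ 0) :
    p * Real.log q ≤ p * Real.log p + q - p := by
  rcases eq_or_lt_of_le hp with h | hp'
  · simp [← h, hq]
  · have hq' : 0 < q := lt_of_le_of_ne hq (Ne.symm (hac (ne_of_gt hp')))
    have h1 : Real.log (q / p) ≤ q / p - 1 := Real.log_le_sub_one_of_pos (by positivity)
    have h2 : Real.log (q / p) = Real.log q - Real.log p :=
      Real.log_div (ne_of_gt hq') (ne_of_gt hp')
    have h3 : p * (q / p) = q := by field_simp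
    nlinarith [mul_le_mul_of_nonneg_left h1 hp]

lemma gibbs_term_strict {p q : ℝ} (hp : 0 < p) (hq : 0 < q) (hne : p ≠ q) :
    p * Real.log q < p * Real.log p + q - p := by
  have h1 : Real.log (q / p) < q / p - 1 :=
    Real.log_lt_sub_one_of_pos (by positivity) (by
      intro h; exact hne (by field_simp at h; linarith))
  have h2 : Real.log (q / p) = Real.log q - Real.log p :=
    Real.log_div (ne_of_gt hq) (ne_of_gt hp)
  have h3 : p * (q / p) = q := by field_simp
  nlinarith [mul_lt_mul_of_pos_left h1 hp]

lemma gibbs {ι : Type*} [Fintype ι] (p q : ι → ℝ)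
    (hp0 : ∀ i, 0 ≤ p i) (hq0 : ∀ i, 0 ≤ q i)
    (hp1 : ∑ i, p i = 1) (hq1 : ∑ i, q i = 1)
    (hac : ∀ i, p i ≠ 0 → q i ≠ 0) :
    ∑ i, p i * Real.log (p i)⁻¹ ≤ ∑ i, p i * Real.log (q i)⁻¹ := by
  have h : ∑ i, p i * Real.log (q i) ≤ ∑ i, (p i * Real.log (p i) + q i - p i) :=
    Finset.sum_le_sum (fun i _ => gibbs_term (hp0 i) (hq0 i) (hac i))
  simp only [Finset.sum_sub_distrib, Finset.sum_add_distrib, hp1, hq1] at h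
  simp only [Real.log_inv, mul_neg, Finset.sum_neg_distrib]
  linarith

lemma gibbs_strict {ι : Type*} [Fintype ι] (p q : ι → ℝ)
    (hp0 : ∀ i, 0 ≤ p i) (hq0 : ∀ i, 0 ≤ q i)
    (hp1 : ∑ i, p i = 1) (hq1 : ∑ i, q i = 1)
    (hac : ∀ i, p i ≠ 0 → q i ≠ 0) (hne : p ≠ q) :
    ∑ i, p i * Real.log (p i)⁻¹ < ∑ i, p i * Real.log (q i)⁻¹ := by
  obtain ⟨i0, hi0, hi0'⟩ : ∃ i, p i ≠ 0 ∧ p i ≠ q i := by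
    by_contra h
    push_neg at h
    apply hne
    have hle : ∀ i, p i ≤ q i := by
      intro i
      by_cases hpi : p i = 0
      · rw [hpi]; exact hq0 i
      · exact le_of_eq (h i hpi)
    have hz : ∑ i, (q i - p i) = 0 := by
      rw [Finset.sum_sub_distrib, hp1, hq1]; ring
    funext i
    have := (Finset.sum_eq_zero_iff_of_nonneg
      (fun i _ => sub_nonneg.2 (hle i))).1 hz i (Finset.mem_univ i)
    linarith [this]
  have h : ∑ i, p i * Real.log (q i) < ∑ i, (p i * Real.log (p i) + q i - p i) :=
    Finset.sum_lt_sum (fun i _ => gibbs_term (hp0 i) (hq0 i) (hac i))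
      ⟨i0, Finset.mem_univ i0,
        gibbs_term_strict (lt_of_le_of_ne (hp0 i0) (Ne.symm hi0))
          (lt_of_le_of_ne (hq0 i0) (Ne.symm (hac i0 hi0))) hi0'⟩
  simp only [Finset.sum_sub_distrib, Finset.sum_add_distrib, hp1, hq1] at h
  simp only [Real.log_inv, mul_neg, Finset.sum_neg_distrib]
  linarith

lemma esum_eq_coe {X : Type*} [Fintype X] (Q W : X → ℝ) (h : ∀ p, W p = 0 → Q p = 0) :
    ∑ p, (Q p : EReal) * negLogE (W p) = ((∑ p, Q p * Real.log (W p)⁻¹ : ℝ) : EReal) := by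
  rw [coe_fsum]
  apply Finset.sum_congr rfl
  intro p _
  by_cases hw : W p = 0
  · simp [negLogE, hw, h p hw]
  · rw [negLogE, if_neg hw, ← EReal.coe_mul]

lemma esum_eq_top {X : Type*} [Fintype X] (Q W : X → ℝ) (hQ0 : ∀ p, 0 ≤ Q p)
    (hW0 : ∀ p, 0 ≤ W p) (hW1 : ∀ p, W p ≤ 1)
    (p0 : X) (hq : Q p0 ≠ 0) (hw : W p0 = 0) :
    ∑ p, (Q p : EReal) * negLogE (W p) = ⊤ := by
  have hterm : ∀ p, (0 : EReal) ≤ (Q p : EReal) * negLogE (W p) := by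
    intro p
    by_cases h0 : W p = 0
    · rcases eq_or_lt_of_le (hQ0 p) with h | h
      · simp [negLogE, h0, ← h]
      · rw [negLogE, if_pos h0, EReal.coe_mul_top_of_pos (by exact_mod_cast h)]
        exact le_top
    · rw [negLogE, if_neg h0, ← EReal.coe_mul]
      have hpos : 0 < W p := lt_of_le_of_ne (hW0 p) (Ne.symm h0)
      have : 0 ≤ Real.log (W p)⁻¹ := Real.log_nonneg ((one_le_inv₀ hpos).2 (hW1 p))
      exact_mod_cast mul_nonneg (hQ0 p) this
  have h1 : ((Q p0 : EReal) * negLogE (W p0)) = ⊤ := by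
    rw [negLogE, if_pos hw, EReal.coe_mul_top_of_pos
      (by exact_mod_cast lt_of_le_of_ne (hQ0 p0) (Ne.symm hq))]
  refine top_le_iff.1 ?_
  calc (⊤ : EReal) = (Q p0 : EReal) * negLogE (W p0) := h1.symm
    _ ≤ _ := Finset.single_le_sum (fun p _ => hterm p) (Finset.mem_univ p0)

lemma coupling_weighted_sum {X Y : Type*} [Fintype X] [Fintype Y]
    {PX : X → ℝ} {PY : Y → ℝ} {Q : X × Y → ℝ}
    (h : IsCoupling PX PY Q) (f : X → ℝ) (g : Y → ℝ) :
    ∑ p : X × Y, Q p * (f p.1 + g p.2) = ∑ x, PX x * f x + ∑ y, PY y * g y := by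
  simp_rw [mul_add, Finset.sum_add_distrib]
  congr 1
  · rw [Fintype.sum_prod_type]
    refine Finset.sum_congr rfl (fun x _ => ?_)
    have hr : ∀ y : Y, Q (x, y) * f (x, y).1 = Q (x, y) * f x := fun y => rfl
    simp only [hr]
    rw [← Finset.sum_mul, h.2.1 x]
  · rw [Fintype.sum_prod_type_right]
    refine Finset.sum_congr rfl (fun y _ => ?_)
    have hr : ∀ x : X, Q (x, y) * g (x, y).2 = Q (x, y) * g y := fun x => rfl
    simp only [hr]
    rw [← Finset.sum_mul, h.2.2 y]

lemma cross_prod {X Y : Type*} [Fintype X] [Fintype Y]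
    {PX : X → ℝ} {PY : Y → ℝ} {Q : X × Y → ℝ} (h : IsCoupling PX PY Q)
    (hzero : ∀ p : X × Y, PX p.1 * PY p.2 = 0 → Q p = 0) :
    ∑ p : X × Y, Q p * Real.log (PX p.1 * PY p.2)⁻¹
      = ∑ x, PX x * Real.log (PX x)⁻¹ + ∑ y, PY y * Real.log (PY y)⁻¹ := by
  rw [← coupling_weighted_sum h]
  refine Finset.sum_congr rfl (fun p _ => ?_)
  by_cases hq : Q p = 0
  · simp [hq]
  · have hw : PX p.1 * PY p.2 ≠ 0 := fun h0 => hq (hzero p h0)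
    rw [mul_inv, Real.log_mul (inv_ne_zero (left_ne_zero_of_mul hw))
      (inv_ne_zero (right_ne_zero_of_mul hw))]

/-- `𝓗(π_X, π_Y ‖ π) ≥ H(π)`, with equality iff `π` is the product of
its marginals. -/
theorem stmt_0 {X Y : Type*} [Fintype X] [Fintype Y]
    (π : X × Y → ℝ) (hπ0 : ∀ p, 0 ≤ π p) (hπ1 : ∑ p, π p = 1) :
    ((entropy π : ℝ) : EReal) ≤
      maxCrossEnt (fun x => ∑ y, π (x, y)) (fun y => ∑ x, π (x, y)) π ∧
    (maxCrossEnt (fun x => ∑ y, π (x, y)) (fun y => ∑ x, π (x, y)) π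
        = ((entropy π : ℝ) : EReal) ↔
      ∀ p : X × Y, π p = (∑ y, π (p.1, y)) * (∑ x, π (x, p.2))) := by
  classical
  set μX : X → ℝ := fun x => ∑ y, π (x, y) with hμXdef
  set μY : Y → ℝ := fun y => ∑ x, π (x, y) with hμYdef
  have hμX0 : ∀ x, 0 ≤ μX x := fun x => Finset.sum_nonneg fun y _ => hπ0 (x, y)
  have hμY0 : ∀ y, 0 ≤ μY y := fun y => Finset.sum_nonneg fun x _ => hπ0 (x, y)
  have hμX1 : ∑ x, μX x = 1 := by rw [← hπ1, Fintype.sum_prod_type]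
  have hμY1 : ∑ y, μY y = 1 := by rw [← hπ1, Fintype.sum_prod_type_right]
  have hπC : IsCoupling μX μY π := ⟨hπ0, fun x => rfl, fun y => rfl⟩
  have hπleX : ∀ p : X × Y, π p ≤ μX p.1 := fun p =>
    Finset.single_le_sum (fun y _ => hπ0 (p.1, y)) (Finset.mem_univ p.2)
  have hπleY : ∀ p : X × Y, π p ≤ μY p.2 := fun p =>
    Finset.single_le_sum (fun x _ => hπ0 (x, p.2)) (Finset.mem_univ p.1)
  have hπle1 : ∀ p : X × Y, π p ≤ 1 := fun p =>
    le_trans (hπleX p) (hμX1 ▸ Finset.single_le_sum (fun x _ => hμX0 x) (Finset.mem_univ p.1))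
  have hsupp : ∀ p : X × Y, π p ≠ 0 → μX p.1 ≠ 0 ∧ μY p.2 ≠ 0 := by
    intro p hp
    exact ⟨fun h => hp (le_antisymm (h ▸ hπleX p) (hπ0 p)),
      fun h => hp (le_antisymm (h ▸ hπleY p) (hπ0 p))⟩
  have hMC : maxCrossEnt μX μY π = sSup {s : EReal | ∃ Q, IsCoupling μX μY Q ∧
      s = ∑ p : X × Y, (Q p : EReal) * negLogE (π p)} := rfl
  have hent : entropy π = ∑ p : X × Y, π p * Real.log (π p)⁻¹ := rfl
  have hmemπ : ((entropy π : ℝ) : EReal) ∈ {s : EReal | ∃ Q, IsCoupling μX μY Q ∧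
      s = ∑ p : X × Y, (Q p : EReal) * negLogE (π p)} :=
    ⟨π, hπC, by rw [esum_eq_coe π π (fun _ h => h), hent]⟩
  have part1 : ((entropy π : ℝ) : EReal) ≤ maxCrossEnt μX μY π := by
    rw [hMC]; exact le_sSup hmemπ
  -- the product of the marginals
  set P : X × Y → ℝ := fun p => μX p.1 * μY p.2 with hPdef
  have hP0 : ∀ p, 0 ≤ P p := fun p => mul_nonneg (hμX0 p.1) (hμY0 p.2)
  have hPC : IsCoupling μX μY P := by
    refine ⟨hP0, fun x => ?_, fun y => ?_⟩
    · show ∑ y, μX x * μY y = μX x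
      rw [← Finset.mul_sum, hμY1, mul_one]
    · show ∑ x, μX x * μY y = μY y
      rw [← Finset.sum_mul, hμX1, one_mul]
  have hPsum : ∑ p : X × Y, P p = 1 := by
    rw [Fintype.sum_prod_type]
    calc ∑ x, ∑ y, P (x, y) = ∑ x, μX x :=
          Finset.sum_congr rfl fun x _ => hPC.2.1 x
      _ = 1 := hμX1
  have hPzero : ∀ p : X × Y, P p = 0 → π p = 0 := by
    intro p h
    rcases mul_eq_zero.1 (show μX p.1 * μY p.2 = 0 from h) with h' | h'
    · exact le_antisymm (h' ▸ hπleX p) (hπ0 p)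
    · exact le_antisymm (h' ▸ hπleY p) (hπ0 p)
  have hbr : ∀ Q : X × Y → ℝ, ∑ p : X × Y, Q p * Real.log (P p)⁻¹
      = ∑ p : X × Y, Q p * Real.log (μX p.1 * μY p.2)⁻¹ :=
    fun Q => Finset.sum_congr rfl fun p _ => rfl
  refine ⟨part1, ?_, ?_⟩
  · -- equality implies product
    intro heq
    by_contra hcon
    push_neg at hcon
    obtain ⟨p0, hp0⟩ := hcon
    have hp0' : π p0 ≠ P p0 := hp0
    have hPneπ : π ≠ P := fun h => hp0' (congrFun h p0)
    have hle : (∑ p : X × Y, (P p : EReal) * negLogE (π p)) ≤ ((entropy π : ℝ) : EReal) := by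
      rw [← heq, hMC]
      exact le_sSup ⟨P, hPC, rfl⟩
    by_cases hAC : ∀ p : X × Y, π p = 0 → P p = 0
    · rw [esum_eq_coe P π hAC, EReal.coe_le_coe_iff] at hle
      have h1 : ∑ p : X × Y, P p * Real.log (P p)⁻¹
          ≤ ∑ p : X × Y, P p * Real.log (π p)⁻¹ :=
        gibbs P π hP0 hπ0 hPsum hπ1 (fun p hp h => hp (hAC p h))
      have h2 : ∑ p : X × Y, π p * Real.log (π p)⁻¹
          < ∑ p : X × Y, π p * Real.log (P p)⁻¹ :=
        gibbs_strict π P hπ0 hP0 hπ1 hPsum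
          (fun p hp => mul_ne_zero (hsupp p hp).1 (hsupp p hp).2) hPneπ
      have hA := cross_prod hPC (fun p h => show P p = 0 from h)
      have hB := cross_prod hπC hPzero
      have hbrP := hbr P
      have hbrπ := hbr π
      linarith
    · push_neg at hAC
      obtain ⟨p1, hπp1, hPp1⟩ := hAC
      rw [esum_eq_top P π hP0 hπ0 hπle1 p1 hPp1 hπp1] at hle
      exact (EReal.coe_ne_top (entropy π)) (top_le_iff.1 hle)
  · -- product implies equality
    intro hprod
    have hprod' : ∀ p : X × Y, π p = P p := hprod
    rw [hMC]
    refine le_antisymm (sSup_le ?_) (hMC ▸ part1)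
    rintro s ⟨Q, hQ, rfl⟩
    have hz : ∀ p : X × Y, π p = 0 → Q p = 0 := by
      intro p h0
      rcases mul_eq_zero.1 ((hprod' p).symm.trans h0) with h | h
      · have := (Finset.sum_eq_zero_iff_of_nonneg (fun y _ => hQ.1 (p.1, y))).1
          ((hQ.2.1 p.1).trans h) p.2 (Finset.mem_univ p.2)
        exact this
      · have := (Finset.sum_eq_zero_iff_of_nonneg (fun x _ => hQ.1 (x, p.2))).1
          ((hQ.2.2 p.2).trans h) p.1 (Finset.mem_univ p.1)
        exact this
    rw [esum_eq_coe Q π hz, EReal.coe_le_coe_iff]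
    have hzQ : ∀ p : X × Y, μX p.1 * μY p.2 = 0 → Q p = 0 :=
      fun p h => hz p ((hprod' p).trans h)
    have hQval := cross_prod hQ hzQ
    have hπval := cross_prod hπC (fun p h => (hprod' p).trans h)
    have hbrQπ : ∑ p : X × Y, Q p * Real.log (π p)⁻¹
        = ∑ p : X × Y, Q p * Real.log (μX p.1 * μY p.2)⁻¹ :=
      Finset.sum_congr rfl fun p _ => by rw [hprod' p]
    have hbrππ : ∑ p : X × Y, π p * Real.log (π p)⁻¹
        = ∑ p : X × Y, π p * Real.log (μX p.1 * μY p.2)⁻¹ :=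
      Finset.sum_congr rfl fun p _ => by rw [hprod' p]
    linarith [hent]
end

section
/- Let π be a pmf on a finite product set 𝒳 × 𝒴 with π(x,y) > 0 for all (x,y), and let π_X, π_Y denote its marginals. Then 𝓗(π_X, π_Y ‖ π) − H(π) ≥ D(π_X ⊗ π_Y ‖ π) + D(π ‖ π_X ⊗ π_Y), where π_X ⊗ π_Y denotes the product pmf (x,y) ↦ π_X(x)π_Y(y). -/
open scoped BigOperators

/-- Relative entropy `D(P‖Q) = ∑_{x : P(x) > 0} P(x) log(P(x)/Q(x))`. -/
noncomputable def relEnt {X : Type*} [Fintype X] (P Q : X → ℝ) : ℝ :=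
  ∑ x, if P x = 0 then 0 else P x * Real.log (P x / Q x)

lemma coe_sum_aux {α : Type*} (s : Finset α) (f : α → ℝ) :
    ((∑ i ∈ s, f i : ℝ) : EReal) = ∑ i ∈ s, ((f i : ℝ) : EReal) :=
  map_sum (⟨⟨Real.toEReal, EReal.coe_zero⟩, EReal.coe_add⟩ : ℝ →+ EReal) f s

/-- for a full-support pmf `π` on a finite product,
`𝓗(π_X, π_Y ‖ π) − H(π) ≥ D(π_X ⊗ π_Y ‖ π) + D(π ‖ π_X ⊗ π_Y)`. -/
theorem stmt_1 {X Y : Type*} [Fintype X] [Fintype Y]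
    (π : X × Y → ℝ) (hπpos : ∀ p, 0 < π p) (hπ1 : ∑ p, π p = 1) :
    ((entropy π
        + relEnt (fun p : X × Y => (∑ y, π (p.1, y)) * (∑ x, π (x, p.2))) π
        + relEnt π (fun p : X × Y => (∑ y, π (p.1, y)) * (∑ x, π (x, p.2))) : ℝ) : EReal)
      ≤ maxCrossEnt (fun x => ∑ y, π (x, y)) (fun y => ∑ x, π (x, y)) π := by
  -- nonemptiness
  have hneP : Nonempty (X × Y) := by
    rcases isEmpty_or_nonempty (X × Y) with h | h
    · rw [Finset.univ_eq_empty, Finset.sum_empty] at hπ1; norm_num at hπ1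
    · exact h
  have hneX : Nonempty X := ⟨hneP.some.1⟩
  have hneY : Nonempty Y := ⟨hneP.some.2⟩
  set PX : X → ℝ := fun x => ∑ y, π (x, y) with hPXdef
  set PY : Y → ℝ := fun y => ∑ x, π (x, y) with hPYdef
  set m : X × Y → ℝ := fun p => PX p.1 * PY p.2 with hmdef
  have hPXpos : ∀ x, 0 < PX x := fun x =>
    Finset.sum_pos (fun y _ => hπpos _) Finset.univ_nonempty
  have hPYpos : ∀ y, 0 < PY y := fun y =>
    Finset.sum_pos (fun x _ => hπpos _) Finset.univ_nonempty
  have hmpos : ∀ p, 0 < m p := fun p => mul_pos (hPXpos _) (hPYpos _)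
  have hsumPX : ∑ x, PX x = 1 := by
    rw [hPXdef]; rw [← Fintype.sum_prod_type (f := π)] at *; exact hπ1
  have hsumPY : ∑ y, PY y = 1 := by
    rw [hPYdef]
    rw [Finset.sum_comm, ← Fintype.sum_prod_type]
    exact hπ1
  have hC : IsCoupling PX PY m := by
    refine ⟨fun p => (hmpos p).le, fun x => ?_, fun y => ?_⟩
    · simp only [hmdef, ← Finset.mul_sum]
      rw [hsumPY, mul_one]
    · simp only [hmdef, ← Finset.sum_mul]
      rw [hsumPX, one_mul]
  -- marginals of m and π agree, hence the key cancellation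
  have hmargX : ∀ x, ∑ y, (m (x, y) - π (x, y)) = 0 := by
    intro x
    rw [Finset.sum_sub_distrib, hC.2.1 x, sub_eq_zero]
  have hmargY : ∀ y, ∑ x, (m (x, y) - π (x, y)) = 0 := by
    intro y
    rw [Finset.sum_sub_distrib, hC.2.2 y, sub_eq_zero]
  have hzero : ∑ p : X × Y, (m p - π p) * Real.log (m p) = 0 := by
    have hlog : ∀ p : X × Y, Real.log (m p) = Real.log (PX p.1) + Real.log (PY p.2) :=
      fun p => Real.log_mul (hPXpos p.1).ne' (hPYpos p.2).ne'
    calc ∑ p : X × Y, (m p - π p) * Real.log (m p)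
        = (∑ p : X × Y, (m p - π p) * Real.log (PX p.1))
          + ∑ p : X × Y, (m p - π p) * Real.log (PY p.2) := by
          rw [← Finset.sum_add_distrib]
          exact Finset.sum_congr rfl fun p _ => by rw [hlog p]; ring
      _ = 0 := by
          have h1 : ∀ x : X, ∑ y, (m (x, y) - π (x, y)) * Real.log (PX x) = 0 := by
            intro x
            rw [← Finset.sum_mul, hmargX x, zero_mul]
          have h2 : ∀ y : Y, ∑ x, (m (x, y) - π (x, y)) * Real.log (PY y) = 0 := by
            intro y
            rw [← Finset.sum_mul, hmargY y, zero_mul]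
          have hA : ∑ p : X × Y, (m p - π p) * Real.log (PX p.1) = 0 := by
            rw [Fintype.sum_prod_type]
            simp [h1]
          have hB : ∑ p : X × Y, (m p - π p) * Real.log (PY p.2) = 0 := by
            rw [Fintype.sum_prod_type, Finset.sum_comm]
            simp [h2]
          rw [hA, hB, add_zero]
  -- the real identity
  have hreal : entropy π + relEnt m π + relEnt π m
      = ∑ p : X × Y, m p * Real.log (π p)⁻¹ := by
    have e1 : relEnt m π = ∑ p : X × Y, m p * Real.log (m p / π p) :=
      Finset.sum_congr rfl fun p _ => if_neg (hmpos p).ne'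
    have e2 : relEnt π m = ∑ p : X × Y, π p * Real.log (π p / m p) :=
      Finset.sum_congr rfl fun p _ => if_neg (hπpos p).ne'
    rw [entropy, e1, e2, ← sub_eq_zero, ← hzero,
      ← Finset.sum_add_distrib, ← Finset.sum_add_distrib, ← Finset.sum_sub_distrib]
    refine Finset.sum_congr rfl fun p _ => ?_
    rw [Real.log_div (hmpos p).ne' (hπpos p).ne', Real.log_div (hπpos p).ne' (hmpos p).ne',
      Real.log_inv]
    ring
  -- conclude via le_sSup
  have hmem : ((entropy π + relEnt m π + relEnt π m : ℝ) : EReal) ∈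
      {s : EReal | ∃ Q, IsCoupling PX PY Q ∧
        s = ∑ p : X × Y, (Q p : EReal) * negLogE (π p)} := by
    refine ⟨m, hC, ?_⟩
    rw [hreal, coe_sum_aux]
    refine Finset.sum_congr rfl fun p _ => ?_
    rw [negLogE, if_neg (hπpos p).ne', EReal.coe_mul]
  exact le_sSup hmem
end

section
/- Let π be a pmf on a finite product set 𝒳 × 𝒴 with π(x,y) > 0 for all (x,y), with marginals π_X and π_Y. Let P_X be a pmf on 𝒳 with P_X(x) > 0 for all x and P_Y a pmf on 𝒴 with P_Y(y) > 0 for all y. Then 𝓗(P_X, P_Y ‖ π) ≥ Σ_{(x,y)} P_X(x) P_Y(y) log(1/π(x,y)), and equality holds if and only if π(x,y) = π_X(x)·π_Y(y) for all (x,y). -/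
open scoped BigOperators

lemma coe_sum_ereal {α : Type*} (s : Finset α) (f : α → ℝ) :
    ((∑ a ∈ s, f a : ℝ) : EReal) = ∑ a ∈ s, ((f a : ℝ) : EReal) := by
  induction s using Finset.cons_induction with
  | empty => simp
  | cons a s h ih => rw [Finset.sum_cons, Finset.sum_cons, EReal.coe_add, ih]

lemma ereal_sum_eq {X Y : Type*} [Fintype X] [Fintype Y]
    (π : X × Y → ℝ) (hπpos : ∀ p, 0 < π p) (Q : X × Y → ℝ) :
    (∑ p : X × Y, (Q p : EReal) * negLogE (π p))
      = ((∑ p : X × Y, Q p * Real.log (π p)⁻¹ : ℝ) : EReal) := by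
  rw [coe_sum_ereal]
  refine Finset.sum_congr rfl fun p _ => ?_
  rw [negLogE, if_neg (hπpos p).ne', EReal.coe_mul]

lemma sum_indep {X Y : Type*} [Fintype X] [Fintype Y] [Nonempty X] [Nonempty Y]
    (π : X × Y → ℝ) (hπpos : ∀ p, 0 < π p)
    (PX : X → ℝ) (PY : Y → ℝ) (Q : X × Y → ℝ) (hQ : IsCoupling PX PY Q)
    (h : ∀ p : X × Y, π p = (∑ y, π (p.1, y)) * (∑ x, π (x, p.2))) :
    ∑ p : X × Y, Q p * Real.log (π p)⁻¹
      = ∑ x, PX x * Real.log (∑ y, π (x, y))⁻¹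
        + ∑ y, PY y * Real.log (∑ x, π (x, y))⁻¹ := by
  have ha : ∀ x, 0 < ∑ y, π (x, y) := fun x =>
    Finset.sum_pos (fun y _ => hπpos _) Finset.univ_nonempty
  have hb : ∀ y, 0 < ∑ x, π (x, y) := fun y =>
    Finset.sum_pos (fun x _ => hπpos _) Finset.univ_nonempty
  have key : ∀ x y, Real.log (π (x, y))⁻¹
      = Real.log (∑ y', π (x, y'))⁻¹ + Real.log (∑ x', π (x', y))⁻¹ := by
    intro x y
    rw [h (x, y), mul_inv, Real.log_mul (inv_ne_zero (ha x).ne') (inv_ne_zero (hb y).ne')]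
  calc ∑ p : X × Y, Q p * Real.log (π p)⁻¹
      = ∑ x, ∑ y, (Q (x, y) * Real.log (∑ y', π (x, y'))⁻¹
          + Q (x, y) * Real.log (∑ x', π (x', y))⁻¹) := by
        rw [Fintype.sum_prod_type]
        exact Finset.sum_congr rfl fun x _ => Finset.sum_congr rfl fun y _ => by
          rw [key x y, mul_add]
    _ = ∑ x, PX x * Real.log (∑ y, π (x, y))⁻¹
        + ∑ y, PY y * Real.log (∑ x, π (x, y))⁻¹ := by
        rw [Finset.sum_congr rfl fun x (_ : x ∈ Finset.univ) => Finset.sum_add_distrib,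
          Finset.sum_add_distrib]
        congr 1
        · exact Finset.sum_congr rfl fun x _ => by rw [← Finset.sum_mul, hQ.2.1 x]
        · rw [Finset.sum_comm]
          exact Finset.sum_congr rfl fun y _ => by rw [← Finset.sum_mul, hQ.2.2 y]

/-- Perturbation function: +1 at `(x,y')` and `(x',y)`, −1 at `(x,y)` and `(x',y')`. -/
noncomputable def pert {X Y : Type*} (x x' : X) (y y' : Y) : X × Y → ℝ := fun p =>
  haveI := Classical.decEq (X × Y)
  (if p = (x, y') then (1:ℝ) else 0) + (if p = (x', y) then 1 else 0)
  - (if p = (x, y) then 1 else 0) - (if p = (x', y') then 1 else 0)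

lemma pert_bound {X Y : Type*} {x x' : X} {y y' : Y} (hxx : x ≠ x') (hyy : y ≠ y')
    (p : X × Y) : -1 ≤ pert x x' y y' p ∧ pert x x' y y' p ≤ 1 := by
  classical
  unfold pert
  split_ifs <;> (try (subst_vars; simp_all [Prod.ext_iff])) <;> norm_num

lemma pert_row {X Y : Type*} [Fintype Y] {x x' : X} {y y' : Y}
    (hxx : x ≠ x') (hyy : y ≠ y') (x0 : X) :
    ∑ y0, pert x x' y y' (x0, y0) = 0 := by
  classical
  unfold pert
  rw [Finset.sum_sub_distrib, Finset.sum_sub_distrib, Finset.sum_add_distrib]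
  by_cases h1 : x0 = x <;> by_cases h2 : x0 = x' <;>
    simp [h1, h2, hxx, hxx.symm, hyy, hyy.symm, Prod.ext_iff, Finset.sum_ite_eq,
      Finset.sum_ite_eq']

lemma pert_col {X Y : Type*} [Fintype X] {x x' : X} {y y' : Y}
    (hxx : x ≠ x') (hyy : y ≠ y') (y0 : Y) :
    ∑ x0, pert x x' y y' (x0, y0) = 0 := by
  classical
  unfold pert
  rw [Finset.sum_sub_distrib, Finset.sum_sub_distrib, Finset.sum_add_distrib]
  by_cases h1 : y0 = y <;> by_cases h2 : y0 = y' <;>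
    simp [h1, h2, hxx, hxx.symm, hyy, hyy.symm, Prod.ext_iff, Finset.sum_ite_eq,
      Finset.sum_ite_eq']

lemma pert_weight {X Y : Type*} [Fintype X] [Fintype Y] (x x' : X) (y y' : Y)
    (f : X × Y → ℝ) :
    ∑ p : X × Y, pert x x' y y' p * f p
      = f (x, y') + f (x', y) - f (x, y) - f (x', y') := by
  classical
  unfold pert
  simp only [add_mul, sub_mul, ite_mul, one_mul, zero_mul]
  rw [Finset.sum_sub_distrib, Finset.sum_sub_distrib, Finset.sum_add_distrib]
  simp [Finset.sum_ite_eq, Finset.sum_ite_eq']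

/-- for a full-support pmf `π` and full-support pmfs `P_X, P_Y`,
`𝓗(P_X, P_Y ‖ π) ≥ ∑ P_X(x) P_Y(y) log(1/π(x,y))`, with equality iff `π` is the
product of its marginals. -/
theorem stmt_2 {X Y : Type*} [Fintype X] [Fintype Y]
    (π : X × Y → ℝ) (hπpos : ∀ p, 0 < π p) (hπ1 : ∑ p, π p = 1)
    (PX : X → ℝ) (hPXpos : ∀ x, 0 < PX x) (hPX1 : ∑ x, PX x = 1)
    (PY : Y → ℝ) (hPYpos : ∀ y, 0 < PY y) (hPY1 : ∑ y, PY y = 1) :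
    ((∑ p : X × Y, PX p.1 * PY p.2 * Real.log (π p)⁻¹ : ℝ) : EReal)
      ≤ maxCrossEnt PX PY π ∧
    (maxCrossEnt PX PY π
        = ((∑ p : X × Y, PX p.1 * PY p.2 * Real.log (π p)⁻¹ : ℝ) : EReal) ↔
      ∀ p : X × Y, π p = (∑ y, π (p.1, y)) * (∑ x, π (x, p.2))) := by
  have hXne : Nonempty X := by
    by_contra h
    rw [not_nonempty_iff] at h
    rw [Finset.univ_eq_empty, Finset.sum_empty] at hPX1
    exact zero_ne_one hPX1
  have hYne : Nonempty Y := by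
    by_contra h
    rw [not_nonempty_iff] at h
    rw [Finset.univ_eq_empty, Finset.sum_empty] at hPY1
    exact zero_ne_one hPY1
  set c : ℝ := ∑ p : X × Y, PX p.1 * PY p.2 * Real.log (π p)⁻¹ with hc
  have hQprod : IsCoupling PX PY (fun p : X × Y => PX p.1 * PY p.2) := by
    refine ⟨fun p => mul_nonneg (hPXpos _).le (hPYpos _).le, fun x => ?_, fun y => ?_⟩
    · show ∑ y, PX x * PY y = PX x
      rw [← Finset.mul_sum, hPY1, mul_one]
    · show ∑ x, PX x * PY y = PY y
      rw [← Finset.sum_mul, hPX1, one_mul]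
  have hmem : ((c : ℝ) : EReal) ∈ {s : EReal | ∃ Q, IsCoupling PX PY Q ∧
      s = ∑ p : X × Y, (Q p : EReal) * negLogE (π p)} :=
    ⟨_, hQprod, by rw [ereal_sum_eq π hπpos]⟩
  have hle : ((c : ℝ) : EReal) ≤ maxCrossEnt PX PY π := le_sSup hmem
  refine ⟨hle, ?_, ?_⟩
  · -- equality → product
    intro heq
    by_contra hnot
    push_neg at hnot
    have hcross : ∃ (x x' : X) (y y' : Y),
        π (x, y) * π (x', y') ≠ π (x, y') * π (x', y) := by
      by_contra hall
      push_neg at hall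
      obtain ⟨p0, hp0⟩ := hnot
      apply hp0
      obtain ⟨x, y⟩ := p0
      have h1 : (∑ y', π (x, y')) * (∑ x', π (x', y))
          = ∑ x' : X, ∑ y' : Y, π (x, y') * π (x', y) := by
        rw [Finset.sum_mul_sum]
        exact Finset.sum_comm
      calc π (x, y) = π (x, y) * ∑ p : X × Y, π p := by rw [hπ1, mul_one]
        _ = ∑ p : X × Y, π (x, y) * π p := by rw [Finset.mul_sum]
        _ = ∑ x' : X, ∑ y' : Y, π (x, y) * π (x', y') := by
            rw [Fintype.sum_prod_type]
        _ = ∑ x' : X, ∑ y' : Y, π (x, y') * π (x', y) :=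
            Finset.sum_congr rfl fun x' _ => Finset.sum_congr rfl fun y' _ =>
              hall x x' y y'
        _ = (∑ y', π (x, y')) * (∑ x', π (x', y)) := h1.symm
    obtain ⟨x, x', y, y', hne⟩ := hcross
    have hxx : x ≠ x' := by rintro rfl; exact hne (mul_comm _ _)
    have hyy : y ≠ y' := by rintro rfl; exact hne rfl
    set D : ℝ := Real.log (π (x, y'))⁻¹ + Real.log (π (x', y))⁻¹
        - Real.log (π (x, y))⁻¹ - Real.log (π (x', y'))⁻¹ with hD
    have hDne : D ≠ 0 := by
      intro h0
      apply hne
      refine Real.log_injOn_pos (Set.mem_Ioi.mpr (mul_pos (hπpos _) (hπpos _)))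
        (Set.mem_Ioi.mpr (mul_pos (hπpos _) (hπpos _))) ?_
      rw [Real.log_mul (hπpos _).ne' (hπpos _).ne',
        Real.log_mul (hπpos _).ne' (hπpos _).ne']
      rw [hD] at h0
      simp only [Real.log_inv] at h0
      linarith
    obtain ⟨p₀, -, hp₀⟩ := Finset.exists_min_image Finset.univ
      (fun p : X × Y => PX p.1 * PY p.2) Finset.univ_nonempty
    set m : ℝ := PX p₀.1 * PY p₀.2 with hm
    have hmpos : 0 < m := mul_pos (hPXpos _) (hPYpos _)
    have hmle : ∀ p : X × Y, m ≤ PX p.1 * PY p.2 := fun p =>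
      hp₀ p (Finset.mem_univ p)
    set ε : ℝ := if 0 < D then m else -m with hε
    have hεD : 0 < ε * D := by
      rcases lt_or_ge 0 D with hD' | hD'
      · rw [hε, if_pos hD']; exact mul_pos hmpos hD'
      · rw [hε, if_neg (not_lt.mpr hD')]
        have : D < 0 := lt_of_le_of_ne hD' hDne
        nlinarith
    have hεm : -m ≤ ε ∧ ε ≤ m := by
      rw [hε]; split_ifs <;> constructor <;> linarith
    set Q1 : X × Y → ℝ := fun p => PX p.1 * PY p.2 + ε * pert x x' y y' p with hQ1
    have hcoup : IsCoupling PX PY Q1 := by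
      refine ⟨?_, ?_, ?_⟩
      · intro p
        have h1 := pert_bound hxx hyy p
        show 0 ≤ PX p.1 * PY p.2 + ε * pert x x' y y' p
        nlinarith [hmle p, hεm.1, hεm.2, h1.1, h1.2]
      · intro x0
        show ∑ y0, (PX x0 * PY y0 + ε * pert x x' y y' (x0, y0)) = PX x0
        rw [Finset.sum_add_distrib, ← Finset.mul_sum, hPY1, mul_one, ← Finset.mul_sum,
          pert_row hxx hyy, mul_zero, add_zero]
      · intro y0
        show ∑ x0, (PX x0 * PY y0 + ε * pert x x' y y' (x0, y0)) = PY y0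
        rw [Finset.sum_add_distrib, ← Finset.sum_mul, hPX1, one_mul, ← Finset.mul_sum,
          pert_col hxx hyy, mul_zero, add_zero]
    have hval : ∑ p : X × Y, Q1 p * Real.log (π p)⁻¹ = c + ε * D := by
      calc ∑ p : X × Y, Q1 p * Real.log (π p)⁻¹
          = ∑ p : X × Y, (PX p.1 * PY p.2 * Real.log (π p)⁻¹
              + ε * (pert x x' y y' p * Real.log (π p)⁻¹)) :=
            Finset.sum_congr rfl fun p _ => by show (_ + _) * _ = _; ring
        _ = c + ε * D := by
            rw [Finset.sum_add_distrib, ← Finset.mul_sum,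
              pert_weight x x' y y' (fun p => Real.log (π p)⁻¹), hc, hD]
    have hmem2 : ((c + ε * D : ℝ) : EReal) ∈ {s : EReal | ∃ Q, IsCoupling PX PY Q ∧
        s = ∑ p : X × Y, (Q p : EReal) * negLogE (π p)} :=
      ⟨Q1, hcoup, by rw [ereal_sum_eq π hπpos, hval]⟩
    have hfin : ((c + ε * D : ℝ) : EReal) ≤ ((c : ℝ) : EReal) := heq ▸ le_sSup hmem2
    rw [EReal.coe_le_coe_iff] at hfin
    linarith
  · -- product → equality
    intro h
    refine le_antisymm (sSup_le ?_) hle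
    rintro s ⟨Q, hQ, rfl⟩
    rw [ereal_sum_eq π hπpos, EReal.coe_le_coe_iff]
    rw [sum_indep π hπpos PX PY Q hQ h, hc,
      show (∑ p : X × Y, PX p.1 * PY p.2 * Real.log (π p)⁻¹)
        = ∑ p : X × Y, (fun p : X × Y => PX p.1 * PY p.2) p * Real.log (π p)⁻¹ from rfl,
      sum_indep π hπpos PX PY _ hQprod h]
end

section
/- Let p ∈ (0, 1/2], α₀ := (1−p)/2, β₀ := p/2, and let π be the pmf on {0,1} × {0,1} with π(x,y) = α₀ if x = y and π(x,y) = β₀ if x ≠ y. Let α, β ∈ [0,1], let P_X be the pmf on {0,1} with P_X(0) = α, and P_Y the pmf with P_Y(0) = β. Then 𝓗(P_X, P_Y ‖ π) = log(1/α₀) + min{α + β, (1−α) + (1−β)} · log(α₀/β₀). -/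
open scoped BigOperators

/-- maximal cross-entropy for the DSBS against arbitrary binary marginals:
`𝓗(P_X, P_Y ‖ π) = log(1/α₀) + min{α+β, (1−α)+(1−β)} log(α₀/β₀)`. -/
theorem stmt_4 (p : ℝ) (hp0 : 0 < p) (hp2 : p ≤ 1 / 2)
    (α β : ℝ) (hα : α ∈ Set.Icc (0 : ℝ) 1) (hβ : β ∈ Set.Icc (0 : ℝ) 1) :
    maxCrossEnt (fun x : Fin 2 => if x = 0 then α else 1 - α)
        (fun y : Fin 2 => if y = 0 then β else 1 - β)
        (fun q : Fin 2 × Fin 2 => if q.1 = q.2 then (1 - p) / 2 else p / 2)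
      = ((Real.log ((1 - p) / 2)⁻¹
          + min (α + β) ((1 - α) + (1 - β)) * Real.log (((1 - p) / 2) / (p / 2)) : ℝ)
          : EReal) := by
  obtain ⟨hα0, hα1⟩ := hα
  obtain ⟨hβ0, hβ1⟩ := hβ
  have ha0 : (0:ℝ) < (1 - p) / 2 := by linarith
  have hb0 : (0:ℝ) < p / 2 := by linarith
  set La := Real.log ((1 - p) / 2)⁻¹ with hLa
  set Lb := Real.log (p / 2)⁻¹ with hLb
  have hL : Real.log (((1 - p) / 2) / (p / 2)) = Lb - La := by
    rw [hLa, hLb, Real.log_div ha0.ne' hb0.ne', Real.log_inv, Real.log_inv]; ring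
  have hD : 0 ≤ Lb - La := by
    rw [← hL]; exact Real.log_nonneg ((one_le_div hb0).mpr (by linarith))
  have hπd : negLogE ((1 - p) / 2) = ((La : ℝ) : EReal) := by
    rw [negLogE, if_neg ha0.ne']
  have hπo : negLogE (p / 2) = ((Lb : ℝ) : EReal) := by
    rw [negLogE, if_neg hb0.ne']
  have hsum : ∀ Q : Fin 2 × Fin 2 → ℝ,
      (∑ q : Fin 2 × Fin 2, (Q q : EReal) *
        negLogE (if q.1 = q.2 then (1 - p) / 2 else p / 2)) =
      ((Q (0,0) * La + Q (0,1) * Lb + Q (1,0) * Lb + Q (1,1) * La : ℝ) : EReal) := by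
    intro Q
    rw [Fintype.sum_prod_type, Fin.sum_univ_two, Fin.sum_univ_two, Fin.sum_univ_two]
    rw [if_pos rfl, if_pos rfl, if_neg (by decide), if_neg (by decide), hπd, hπo]
    push_cast
    exact (add_assoc _ _ _).symm
  rw [maxCrossEnt, hL]
  apply le_antisymm
  · apply sSup_le
    rintro s ⟨Q, ⟨hQ0, hQX, hQY⟩, rfl⟩
    have e1 : Q (0,0) + Q (0,1) = α := by simpa [Fin.sum_univ_two] using hQX 0
    have e2 : Q (1,0) + Q (1,1) = 1 - α := by simpa [Fin.sum_univ_two] using hQX 1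
    have e3 : Q (0,0) + Q (1,0) = β := by simpa [Fin.sum_univ_two] using hQY 0
    have e4 : Q (0,1) + Q (1,1) = 1 - β := by simpa [Fin.sum_univ_two] using hQY 1
    rw [hsum, EReal.coe_le_coe_iff]
    have hsum1 : Q (0,0) + Q (0,1) + Q (1,0) + Q (1,1) = 1 := by linarith
    have key : Q (0,0) * La + Q (0,1) * Lb + Q (1,0) * Lb + Q (1,1) * La
        = La + (Q (0,1) + Q (1,0)) * (Lb - La) := by linear_combination La * hsum1
    have hm : Q (0,1) + Q (1,0) ≤ min (α + β) ((1 - α) + (1 - β)) :=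
      le_min (by linarith [hQ0 (0,0)]) (by linarith [hQ0 (1,1)])
    rw [key]
    exact add_le_add le_rfl (mul_le_mul_of_nonneg_right hm hD)
  · apply le_sSup
    set t := max 0 (α + β - 1) with ht
    have ht0 : 0 ≤ t := le_max_left _ _
    have ht1 : α + β - 1 ≤ t := le_max_right _ _
    have ht2 : t ≤ α := max_le hα0 (by linarith)
    have ht3 : t ≤ β := max_le hβ0 (by linarith)
    refine ⟨fun q => if q = (0,0) then t else if q = (0,1) then α - t
        else if q = (1,0) then β - t else 1 - α - β + t, ⟨?_, ?_, ?_⟩, ?_⟩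
    · rintro ⟨x, y⟩
      fin_cases x <;> fin_cases y <;> norm_num [Prod.ext_iff] <;> linarith
    · intro x
      fin_cases x <;> norm_num [Fin.sum_univ_two, Prod.ext_iff] <;> ring
    · intro y
      fin_cases y <;> norm_num [Fin.sum_univ_two, Prod.ext_iff] <;> ring
    · rw [hsum, EReal.coe_eq_coe_iff]
      norm_num [Prod.ext_iff]
      rcases max_cases 0 (α + β - 1) with ⟨he, hc⟩ | ⟨he, hc⟩ <;> rw [ht, he]
      · rw [min_eq_left (by linarith)]; ring
      · rw [min_eq_right (by linarith)]; ring
end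

section
/- Let μ₁, μ₂ ∈ ℝ and α, β > 0, and let P be the Gaussian measure on ℝ with mean μ₁ and variance α and Q the Gaussian measure on ℝ with mean μ₂ and variance β. Then the infimum over all probability measures R on ℝ × ℝ whose first marginal is P and whose second marginal is Q of ∫ (x − μ₁)(y − μ₂) dR(x,y) equals −√(αβ), and this infimum is attained by some such coupling. -/
open MeasureTheory ProbabilityTheory Real Set

lemma rpow_two_eq (x : ℝ) : x ^ (2:ℝ) = x ^ 2 := by
  rw [show (2:ℝ) = ((2:ℕ):ℝ) by norm_num, Real.rpow_natCast]

lemma integrable_sq_mul_exp_neg_mul_sq {b : ℝ} (hb : 0 < b) :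
    Integrable (fun x : ℝ => x ^ 2 * Real.exp (-b * x ^ 2)) := by
  have := integrable_rpow_mul_exp_neg_mul_sq hb (s := 2) (by norm_num)
  simpa [rpow_two_eq] using this

lemma integral_sq_mul_exp_neg_mul_sq {b : ℝ} (hb : 0 < b) :
    ∫ x : ℝ, x ^ 2 * Real.exp (-b * x ^ 2) = Real.sqrt (π / b) / (2 * b) := by
  have hint := integrable_sq_mul_exp_neg_mul_sq hb
  have hIoi : ∫ x in Ioi (0:ℝ), x ^ 2 * Real.exp (-b * x ^ 2)
      = b ^ (-((2:ℝ)+1)/2) * (1/2) * Real.Gamma (((2:ℝ)+1)/2) := by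
    rw [← integral_rpow_mul_exp_neg_mul_rpow (by norm_num : (0:ℝ) < 2)
      (by norm_num : (-1:ℝ) < 2) hb]
    refine setIntegral_congr_fun measurableSet_Ioi fun x hx => ?_
    simp [rpow_two_eq]
  have hIic : ∫ x in Iic (0:ℝ), x ^ 2 * Real.exp (-b * x ^ 2)
      = ∫ x in Ioi (0:ℝ), x ^ 2 * Real.exp (-b * x ^ 2) := by
    rw [show (0:ℝ) = -0 by norm_num, ← integral_comp_neg_Ioi]
    simp
  have hsplit := intervalIntegral.integral_Iic_add_Ioi (b := (0:ℝ))
    hint.integrableOn hint.integrableOn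
  have hGamma : Real.Gamma (((2:ℝ)+1)/2) = Real.sqrt π / 2 := by
    rw [show (((2:ℝ)+1)/2) = 1/2 + 1 by norm_num, Real.Gamma_add_one (by norm_num),
      Real.Gamma_one_half_eq]
    ring
  rw [← hsplit, hIic, hIoi, hGamma]
  have hb32 : b ^ (-((2:ℝ)+1)/2) = (Real.sqrt b)⁻¹ * b⁻¹ := by
    rw [show (-((2:ℝ)+1)/2) = (-(1/2:ℝ)) + (-1) by norm_num, Real.rpow_add hb,
      Real.rpow_neg_one, Real.rpow_neg hb.le, Real.sqrt_eq_rpow]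
  have h1 : Real.sqrt (π / b) = Real.sqrt π / Real.sqrt b :=
    Real.sqrt_div Real.pi_pos.le b
  have hsb : Real.sqrt b ≠ 0 := by positivity
  rw [hb32, h1]
  field_simp
  ring

lemma abs_mul_le_half (a b : ℝ) : ‖a * b‖ ≤ (a ^ 2 + b ^ 2) / 2 := by
  rw [Real.norm_eq_abs, abs_mul]
  linarith [two_mul_le_add_sq |a| |b|, sq_abs a, sq_abs b]


lemma gaussianPDF_eq_nnreal (m : ℝ) (v : NNReal) :
    gaussianPDF m v = fun x => ((gaussianPDFReal m v x).toNNReal : ENNReal) := rfl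

lemma exp_arg_eq (m v x : ℝ) : -(x - m)^2 / (2 * v) = -((2*v)⁻¹) * (x - m)^2 := by
  ring

lemma integrable_sub_sq_gaussianReal (m : ℝ) (v : NNReal) (hv : v ≠ 0) :
    Integrable (fun x => (x - m) ^ 2) (gaussianReal m v) := by
  have hv' : (0:ℝ) < v := by positivity
  rw [gaussianReal_of_var_ne_zero _ hv, gaussianPDF_eq_nnreal,
    integrable_withDensity_iff_integrable_smul
      (measurable_gaussianPDFReal m v).real_toNNReal]
  have : ∀ x : ℝ, (gaussianPDFReal m v x).toNNReal • ((x - m) ^ 2 : ℝ)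
      = (Real.sqrt (2 * π * v))⁻¹ * ((x - m) ^ 2 * Real.exp (-((2*(v:ℝ))⁻¹) * (x - m) ^ 2)) := by
    intro x
    rw [NNReal.smul_def, smul_eq_mul, Real.coe_toNNReal _ (gaussianPDFReal_nonneg m v x),
      gaussianPDFReal, ← exp_arg_eq]
    push_cast
    ring
  simp only [this]
  exact (((integrable_sq_mul_exp_neg_mul_sq (by positivity : (0:ℝ) < (2*(v:ℝ))⁻¹))).comp_sub_right
    m).const_mul _

lemma integral_sub_sq_gaussianReal (m : ℝ) (v : NNReal) (hv : v ≠ 0) :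
    ∫ x, (x - m) ^ 2 ∂(gaussianReal m v) = v := by
  have hv' : (0:ℝ) < v := by positivity
  rw [gaussianReal_of_var_ne_zero _ hv, gaussianPDF_eq_nnreal,
    integral_withDensity_eq_integral_smul (measurable_gaussianPDFReal m v).real_toNNReal]
  have heq : ∀ x : ℝ, (gaussianPDFReal m v x).toNNReal • ((x - m) ^ 2 : ℝ)
      = (Real.sqrt (2 * π * v))⁻¹ * ((x - m) ^ 2 * Real.exp (-((2*(v:ℝ))⁻¹) * (x - m) ^ 2)) := by
    intro x
    rw [NNReal.smul_def, smul_eq_mul, Real.coe_toNNReal _ (gaussianPDFReal_nonneg m v x),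
      gaussianPDFReal, ← exp_arg_eq]
    push_cast
    ring
  simp only [heq]
  rw [integral_const_mul]
  have hb : (0:ℝ) < (2*(v:ℝ))⁻¹ := by positivity
  have hcmp : ∫ x : ℝ, (x - m) ^ 2 * Real.exp (-((2*(v:ℝ))⁻¹) * (x - m) ^ 2)
      = ∫ x : ℝ, x ^ 2 * Real.exp (-((2*(v:ℝ))⁻¹) * x ^ 2) := by
    exact integral_sub_right_eq_self (fun x => x ^ 2 * Real.exp (-((2*(v:ℝ))⁻¹) * x ^ 2)) m
  rw [hcmp, integral_sq_mul_exp_neg_mul_sq hb]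
  rw [show π / (2*(v:ℝ))⁻¹ = 2 * π * v by field_simp]
  rw [show (2 * (2*(v:ℝ))⁻¹) = (v:ℝ)⁻¹ by field_simp]
  have hs : Real.sqrt (2 * π * v) ≠ 0 := by positivity
  field_simp


/-- the minimum over couplings of two Gaussians of
`∫ (x − μ₁)(y − μ₂) dR` equals `−√(αβ)`, and it is attained. -/
theorem stmt_6 (μ₁ μ₂ : ℝ) (α β : NNReal) (hα : 0 < α) (hβ : 0 < β) :
    IsLeast
      {v : ℝ | ∃ R : Measure (ℝ × ℝ), IsProbabilityMeasure R ∧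
        R.map Prod.fst = gaussianReal μ₁ α ∧
        R.map Prod.snd = gaussianReal μ₂ β ∧
        v = ∫ q : ℝ × ℝ, (q.1 - μ₁) * (q.2 - μ₂) ∂ R}
      (-Real.sqrt ((α : ℝ) * (β : ℝ))) := by
  have hα' : (0:ℝ) < α := by positivity
  have hβ' : (0:ℝ) < β := by positivity
  set c : ℝ := Real.sqrt ((β:ℝ) / (α:ℝ)) with hc
  have hc0 : 0 < c := Real.sqrt_pos.mpr (by positivity)
  have hc2 : c ^ 2 = (β:ℝ) / (α:ℝ) := Real.sq_sqrt (by positivity)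
  have hcab : c * (α:ℝ) = Real.sqrt ((α:ℝ) * (β:ℝ)) := by
    rw [hc, show ((α:ℝ)) = Real.sqrt ((α:ℝ)^2) by rw [Real.sqrt_sq hα'.le],
      ← Real.sqrt_mul (by positivity)]
    congr 1
    field_simp
    rw [Real.sq_sqrt (sq_nonneg _)]
  constructor
  · -- membership: antithetic coupling
    set T : ℝ → ℝ := fun x => -c * x + (c * μ₁ + μ₂) with hT
    have hTm : Measurable T := (measurable_id.const_mul (-c)).add_const _
    have hprod : Measurable (fun x : ℝ => (x, T x)) := measurable_id.prodMk hTm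
    refine ⟨(gaussianReal μ₁ α).map (fun x => (x, T x)), ?_, ?_, ?_, ?_⟩
    · exact Measure.isProbabilityMeasure_map hprod.aemeasurable
    · rw [Measure.map_map measurable_fst hprod]
      have hfe : (Prod.fst ∘ fun x : ℝ => (x, T x)) = id := rfl
      rw [hfe, Measure.map_id]
    · rw [Measure.map_map measurable_snd hprod]
      have : Prod.snd ∘ (fun x : ℝ => (x, T x)) = (· + (c * μ₁ + μ₂)) ∘ ((-c) * ·) := by
        ext x; simp [hT]
      rw [this, ← Measure.map_map (measurable_id'.add_const _) (measurable_id'.const_mul _),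
        gaussianReal_map_const_mul, gaussianReal_map_add_const]
      congr 1
      · ring
      · ext
        push_cast
        rw [show ((-c)^2 : ℝ) = c^2 by ring, hc2]
        field_simp
    · rw [integral_map hprod.aemeasurable (f := fun q : ℝ × ℝ => (q.1 - μ₁) * (q.2 - μ₂))
        ((measurable_fst.sub_const μ₁).mul (measurable_snd.sub_const μ₂)).aestronglyMeasurable]
      have : ∀ x : ℝ, (x - μ₁) * (T x - μ₂) = -c * (x - μ₁)^2 := by
        intro x; simp only [hT]; ring
      simp only [this]
      rw [integral_const_mul, integral_sub_sq_gaussianReal μ₁ α hα.ne', ← hcab]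
      ring
  · -- lower bound
    rintro v ⟨R, hR, h1, h2, rfl⟩
    have haefst : AEMeasurable (Prod.fst : ℝ × ℝ → ℝ) R := measurable_fst.aemeasurable
    have haesnd : AEMeasurable (Prod.snd : ℝ × ℝ → ℝ) R := measurable_snd.aemeasurable
    set f : ℝ × ℝ → ℝ := fun q => q.1 - μ₁ with hfdef
    set g : ℝ × ℝ → ℝ := fun q => q.2 - μ₂ with hgdef
    have hm1 : Measurable (fun x : ℝ => (x - μ₁)^2) := by fun_prop
    have hm2 : Measurable (fun x : ℝ => (x - μ₂)^2) := by fun_prop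
    have hf2 : Integrable (fun q => f q ^ 2) R := by
      have := integrable_sub_sq_gaussianReal μ₁ α hα.ne'
      rw [← h1] at this
      exact (integrable_map_measure hm1.aestronglyMeasurable haefst).mp this
    have hg2 : Integrable (fun q => g q ^ 2) R := by
      have := integrable_sub_sq_gaussianReal μ₂ β hβ.ne'
      rw [← h2] at this
      exact (integrable_map_measure hm2.aestronglyMeasurable haesnd).mp this
    have hif2 : ∫ q, f q ^ 2 ∂ R = (α:ℝ) := by
      have := integral_sub_sq_gaussianReal μ₁ α hα.ne'
      rw [← h1, integral_map haefst hm1.aestronglyMeasurable] at this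
      exact this
    have hig2 : ∫ q, g q ^ 2 ∂ R = (β:ℝ) := by
      have := integral_sub_sq_gaussianReal μ₂ β hβ.ne'
      rw [← h2, integral_map haesnd hm2.aestronglyMeasurable] at this
      exact this
    have hfg : Integrable (fun q => f q * g q) R := by
      refine Integrable.mono' ((hf2.add hg2).div_const 2)
        ((measurable_fst.sub_const μ₁).mul (measurable_snd.sub_const μ₂)).aestronglyMeasurable ?_
      filter_upwards with q
      exact abs_mul_le_half (f q) (g q)
    have hsq : 0 ≤ ∫ q, (c * f q + g q) ^ 2 ∂ R :=
      integral_nonneg fun q => sq_nonneg _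
    have hexp : ∫ q, (c * f q + g q) ^ 2 ∂ R
        = c^2 * ∫ q, f q ^ 2 ∂ R + 2 * c * ∫ q, f q * g q ∂ R + ∫ q, g q ^ 2 ∂ R := by
      have hpt : ∀ q, (c * f q + g q) ^ 2
          = c^2 * f q ^ 2 + 2 * c * (f q * g q) + g q ^ 2 := by intro q; ring
      simp only [hpt]
      have i1 : Integrable (fun q => c^2 * f q ^ 2) R := hf2.const_mul _
      have i2 : Integrable (fun q => 2 * c * (f q * g q)) R := hfg.const_mul _
      have i12 : Integrable (fun q => c ^ 2 * f q ^ 2 + 2 * c * (f q * g q)) R := i1.add i2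
      rw [integral_add i12 hg2, integral_add i1 i2,
        integral_const_mul, integral_const_mul]
    rw [hexp, hif2, hig2, hc2] at hsq
    have hkey : (β:ℝ) / (α:ℝ) * (α:ℝ) = β := by field_simp
    rw [hkey] at hsq
    -- hsq : 0 ≤ β + 2*c*I + β ; want -√(αβ) ≤ I, with c*√(αβ) = ?
    have hcs : c * Real.sqrt ((α:ℝ) * (β:ℝ)) = (β:ℝ) := by
      rw [← hcab]; nlinarith [hc2, hα'.ne']
    nlinarith [hsq, hc0, hcs]
end

section
/- Let ρ ∈ [0, 1) and let π_ρ : ℝ² → ℝ be the bivariate Gaussian density π_ρ(x,y) = (2π√(1−ρ²))⁻¹ exp(−(x² − 2ρxy + y²)/(2(1−ρ²))). Let μ₁, μ₂ ∈ ℝ and α, β > 0 satisfy α + μ₁² = 1 and β + μ₂² = 1, and let P be the Gaussian measure on ℝ with mean μ₁ and variance α and Q the Gaussian measure with mean μ₂ and variance β. Then the supremum over all couplings R of (P, Q) of ∫ log(1/π_ρ(x,y)) dR(x,y) equals log(2π√(1−ρ²)) + (1 + ρ(√(αβ) − μ₁μ₂))/(1−ρ²), and this supremum is attained. -/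
open MeasureTheory ProbabilityTheory

namespace Stmt7Aux

open Real Set
open scoped ENNReal NNReal

lemma stdGaussian_eq :
    gaussianReal 0 1 =
      (volume : Measure ℝ).withDensity
        (fun x => ((gaussianPDFReal 0 1 x).toNNReal : ℝ≥0∞)) := by
  rw [gaussianReal_of_var_ne_zero 0 one_ne_zero]; rfl

lemma meas_pdf : Measurable fun x => (gaussianPDFReal 0 1 x).toNNReal :=
  (measurable_gaussianPDFReal 0 1).real_toNNReal

lemma integral_stdGaussian (g : ℝ → ℝ) :
    ∫ x, g x ∂(gaussianReal 0 1) = ∫ x, gaussianPDFReal 0 1 x * g x := by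
  rw [stdGaussian_eq, integral_withDensity_eq_integral_smul meas_pdf]
  congr 1; ext x
  simp [NNReal.smul_def, Real.coe_toNNReal _ (gaussianPDFReal_nonneg 0 1 x)]

lemma integrable_stdGaussian_iff (g : ℝ → ℝ) :
    Integrable g (gaussianReal 0 1) ↔
      Integrable (fun x => gaussianPDFReal 0 1 x * g x) volume := by
  rw [stdGaussian_eq, integrable_withDensity_iff_integrable_smul meas_pdf]
  constructor <;> intro h <;> refine h.congr (Filter.Eventually.of_forall fun x => ?_) <;>
    simp [NNReal.smul_def, Real.coe_toNNReal _ (gaussianPDFReal_nonneg 0 1 x), mul_comm]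

lemma pdf_eq : gaussianPDFReal 0 1 = fun x =>
    (Real.sqrt (2 * π))⁻¹ * Real.exp (-x ^ 2 / 2) := by
  funext x; simp [gaussianPDFReal]

lemma integrable_vol_sq :
    Integrable (fun x : ℝ => x ^ 2 * Real.exp (-x ^ 2 / 2)) volume := by
  have h := integrable_rpow_mul_exp_neg_mul_sq (b := (1:ℝ)/2) (by norm_num) (s := 2) (by norm_num)
  refine h.congr (Filter.Eventually.of_forall fun x => ?_)
  simp only [Real.rpow_two]; ring_nf

lemma integrable_vol_id :
    Integrable (fun x : ℝ => x * Real.exp (-x ^ 2 / 2)) volume := by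
  have h := integrable_mul_exp_neg_mul_sq (b := (1:ℝ)/2) (by norm_num)
  refine h.congr (Filter.Eventually.of_forall fun x => ?_)
  ring_nf

lemma integral_vol_sq :
    ∫ x : ℝ, x ^ 2 * Real.exp (-x ^ 2 / 2) = Real.sqrt (2 * π) := by
  have habs : ∫ x : ℝ, |x| ^ 2 * Real.exp (-|x| ^ 2 / 2) = 2 * ∫ x in Ioi (0:ℝ),
      x ^ 2 * Real.exp (-x ^ 2 / 2) :=
    integral_comp_abs (f := fun x => x ^ 2 * Real.exp (-x ^ 2 / 2))
  simp only [sq_abs] at habs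
  rw [habs]
  have hIoi : ∫ x in Ioi (0:ℝ), x ^ 2 * Real.exp (-x ^ 2 / 2)
      = ((1:ℝ)/2) ^ (-((2:ℝ) + 1) / 2) * (1 / 2) * Real.Gamma (((2:ℝ) + 1) / 2) := by
    rw [← integral_rpow_mul_exp_neg_mul_rpow (p := 2) (q := 2) (b := 1/2) (by norm_num)
      (by norm_num) (by norm_num)]
    refine setIntegral_congr_fun measurableSet_Ioi fun x _ => ?_
    simp only [Real.rpow_two]
    ring_nf
  rw [hIoi]
  have hG : Real.Gamma (((2:ℝ) + 1) / 2) = Real.sqrt π / 2 := by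
    have h32 : ((2:ℝ) + 1) / 2 = 1 / 2 + 1 := by norm_num
    rw [h32, Real.Gamma_add_one (by norm_num), Real.Gamma_one_half_eq]
    ring
  have hpow : ((1:ℝ)/2) ^ (-((2:ℝ) + 1) / 2) = 2 * Real.sqrt 2 := by
    rw [one_div, Real.inv_rpow (by norm_num), ← Real.rpow_neg (by norm_num)]
    have h32 : -(-((2:ℝ) + 1) / 2) = 1 + 1/2 := by norm_num
    rw [h32, Real.rpow_add (by norm_num), Real.rpow_one, ← Real.sqrt_eq_rpow]
  rw [hpow, hG, Real.sqrt_mul (by norm_num)]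
  ring

lemma integral_vol_id :
    ∫ x : ℝ, x * Real.exp (-x ^ 2 / 2) = 0 := by
  set f : ℝ → ℝ := fun x => x * Real.exp (-x ^ 2 / 2) with hf
  have hneg : ∫ x : ℝ, f (-x) = ∫ x : ℝ, f x := integral_neg_eq_self f volume
  have hodd : ∀ x : ℝ, f (-x) = -f x := by
    intro x; simp only [hf, neg_sq]; ring
  have h2 : ∫ x : ℝ, f (-x) = -∫ x : ℝ, f x := by
    simp only [hodd]; exact integral_neg f
  linarith [hneg.symm.trans h2]

lemma integrable_sq_std : Integrable (fun x : ℝ => x ^ 2) (gaussianReal 0 1) := by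
  rw [integrable_stdGaussian_iff, pdf_eq]
  refine (integrable_vol_sq.const_mul (Real.sqrt (2 * π))⁻¹).congr
    (Filter.Eventually.of_forall fun x => ?_)
  ring

lemma integrable_id_std : Integrable (fun x : ℝ => x) (gaussianReal 0 1) := by
  rw [integrable_stdGaussian_iff, pdf_eq]
  refine (integrable_vol_id.const_mul (Real.sqrt (2 * π))⁻¹).congr
    (Filter.Eventually.of_forall fun x => ?_)
  ring

lemma sqrt_two_pi_pos : (0:ℝ) < Real.sqrt (2 * π) :=
  Real.sqrt_pos.mpr (by positivity)

lemma integral_sq_std : ∫ x, x ^ 2 ∂(gaussianReal 0 1) = 1 := by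
  rw [integral_stdGaussian, pdf_eq]
  have h : ∫ x : ℝ, (Real.sqrt (2 * π))⁻¹ * Real.exp (-x ^ 2 / 2) * x ^ 2
      = (Real.sqrt (2 * π))⁻¹ * ∫ x : ℝ, x ^ 2 * Real.exp (-x ^ 2 / 2) := by
    rw [← integral_const_mul]
    congr 1; funext x; ring
  rw [h, integral_vol_sq, inv_mul_cancel₀ sqrt_two_pi_pos.ne']

lemma integral_id_std : ∫ x, x ∂(gaussianReal 0 1) = 0 := by
  rw [integral_stdGaussian, pdf_eq]
  have h : ∫ x : ℝ, (Real.sqrt (2 * π))⁻¹ * Real.exp (-x ^ 2 / 2) * x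
      = (Real.sqrt (2 * π))⁻¹ * ∫ x : ℝ, x * Real.exp (-x ^ 2 / 2) := by
    rw [← integral_const_mul]
    congr 1; funext x; ring
  rw [h, integral_vol_id, mul_zero]

lemma integrable_poly2_std (a b c : ℝ) :
    Integrable (fun x : ℝ => a * x ^ 2 + b * x + c) (gaussianReal 0 1) :=
  ((integrable_sq_std.const_mul a).add (integrable_id_std.const_mul b)).add (integrable_const c)

lemma integral_poly2_std (a b c : ℝ) :
    ∫ x, (a * x ^ 2 + b * x + c) ∂(gaussianReal 0 1) = a + c := by
  have hab : Integrable (fun x : ℝ => a * x ^ 2 + b * x) (gaussianReal 0 1) := by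
    exact (integrable_sq_std.const_mul a).add (integrable_id_std.const_mul b)
  rw [integral_add (f := fun x : ℝ => a * x ^ 2 + b * x) (g := fun _ => c) hab
      (integrable_const c),
    integral_add (f := fun x : ℝ => a * x ^ 2) (g := fun x : ℝ => b * x)
      (integrable_sq_std.const_mul a) (integrable_id_std.const_mul b),
    integral_const_mul, integral_const_mul, integral_sq_std, integral_id_std, integral_const]
  simp

lemma map_std (c m : ℝ) (v : ℝ≥0) (hc : c ^ 2 = (v:ℝ)) :
    (gaussianReal 0 1).map (fun x => m + c * x) = gaussianReal m v := by
  have hv : (⟨c ^ 2, sq_nonneg c⟩ : ℝ≥0) * 1 = v := by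
    rw [mul_one]
    exact NNReal.coe_injective (by exact hc)
  have h1 : (gaussianReal 0 1).map (fun x => c * x) = gaussianReal 0 v := by
    have h := gaussianReal_map_const_mul (μ := 0) (v := 1) c
    rw [mul_zero] at h
    rw [← hv]
    exact h
  have hcomp : (fun x : ℝ => m + c * x) = (fun y : ℝ => y + m) ∘ (fun x => c * x) := by
    funext x; simp [add_comm]
  rw [hcomp, ← Measure.map_map ((measurable_add_const m)) (measurable_const_mul c), h1,
    gaussianReal_map_add_const m, zero_add]

lemma gauss_eq_map (m : ℝ) (v : ℝ≥0) :
    gaussianReal m v = (gaussianReal 0 1).map (fun x => m + Real.sqrt v * x) :=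
  (map_std _ _ _ (Real.sq_sqrt v.coe_nonneg)).symm

lemma meas_affine (m c : ℝ) : Measurable fun x : ℝ => m + c * x :=
  measurable_const.add (measurable_id.const_mul c)

lemma integrable_id_gaussian (m : ℝ) (v : ℝ≥0) :
    Integrable (fun x : ℝ => x) (gaussianReal m v) := by
  rw [gauss_eq_map m v,
    integrable_map_measure measurable_id'.aestronglyMeasurable (meas_affine m _).aemeasurable]
  refine (integrable_poly2_std 0 (Real.sqrt v) m).congr
    (Filter.Eventually.of_forall fun x => ?_)
  simp [Function.comp]; ring

lemma integrable_sq_gaussian (m : ℝ) (v : ℝ≥0) :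
    Integrable (fun x : ℝ => x ^ 2) (gaussianReal m v) := by
  rw [gauss_eq_map m v,
    integrable_map_measure (measurable_id'.pow_const 2).aestronglyMeasurable
      (meas_affine m _).aemeasurable]
  refine (integrable_poly2_std (Real.sqrt v ^ 2) (2 * m * Real.sqrt v) (m ^ 2)).congr
    (Filter.Eventually.of_forall fun x => ?_)
  simp only [Function.comp]; ring

lemma integral_id_gaussian (m : ℝ) (v : ℝ≥0) :
    ∫ x, x ∂(gaussianReal m v) = m := by
  rw [gauss_eq_map m v,
    integral_map (meas_affine m _).aemeasurable measurable_id'.aestronglyMeasurable]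
  have h : ∫ x, (m + Real.sqrt v * x) ∂(gaussianReal 0 1)
      = ∫ x, (0 * x ^ 2 + Real.sqrt v * x + m) ∂(gaussianReal 0 1) :=
    integral_congr_ae (Filter.Eventually.of_forall fun x => by ring)
  rw [h, integral_poly2_std]
  ring

lemma integral_sq_gaussian (m : ℝ) (v : ℝ≥0) :
    ∫ x, x ^ 2 ∂(gaussianReal m v) = (v : ℝ) + m ^ 2 := by
  rw [gauss_eq_map m v,
    integral_map (meas_affine m _).aemeasurable (measurable_id'.pow_const 2).aestronglyMeasurable]
  have h : ∫ x, (m + Real.sqrt v * x) ^ 2 ∂(gaussianReal 0 1)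
      = ∫ x, (Real.sqrt v ^ 2 * x ^ 2 + 2 * m * Real.sqrt v * x + m ^ 2) ∂(gaussianReal 0 1) :=
    integral_congr_ae (Filter.Eventually.of_forall fun x => by ring)
  rw [h, integral_poly2_std, Real.sq_sqrt v.coe_nonneg]

lemma integral_quad (R : Measure (ℝ × ℝ)) [IsProbabilityMeasure R]
    (hx2 : Integrable (fun q : ℝ × ℝ => q.1 ^ 2) R)
    (hy2 : Integrable (fun q : ℝ × ℝ => q.2 ^ 2) R)
    (hxy : Integrable (fun q : ℝ × ℝ => q.1 * q.2) R)
    (hx : Integrable (fun q : ℝ × ℝ => q.1) R)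
    (hy : Integrable (fun q : ℝ × ℝ => q.2) R)
    (a b c d e f : ℝ) :
    ∫ q : ℝ × ℝ, (a * q.1 ^ 2 + b * q.2 ^ 2 + c * (q.1 * q.2) + d * q.1 + e * q.2 + f) ∂ R
      = a * (∫ q : ℝ × ℝ, q.1 ^ 2 ∂ R) + b * (∫ q : ℝ × ℝ, q.2 ^ 2 ∂ R)
        + c * (∫ q : ℝ × ℝ, q.1 * q.2 ∂ R) + d * (∫ q : ℝ × ℝ, q.1 ∂ R)
        + e * (∫ q : ℝ × ℝ, q.2 ∂ R) + f := by
  have I1 := hx2.const_mul a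
  have I2 := hy2.const_mul b
  have I3 := hxy.const_mul c
  have I4 := hx.const_mul d
  have I5 := hy.const_mul e
  have J12 : Integrable (fun q : ℝ × ℝ => a * q.1 ^ 2 + b * q.2 ^ 2) R := by
    exact I1.add I2
  have J13 : Integrable (fun q : ℝ × ℝ => a * q.1 ^ 2 + b * q.2 ^ 2 + c * (q.1 * q.2)) R := by
    exact J12.add I3
  have J14 : Integrable
      (fun q : ℝ × ℝ => a * q.1 ^ 2 + b * q.2 ^ 2 + c * (q.1 * q.2) + d * q.1) R := by
    exact J13.add I4
  have J15 : Integrable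
      (fun q : ℝ × ℝ => a * q.1 ^ 2 + b * q.2 ^ 2 + c * (q.1 * q.2) + d * q.1 + e * q.2) R := by
    exact J14.add I5
  rw [integral_add (f := fun q : ℝ × ℝ =>
      a * q.1 ^ 2 + b * q.2 ^ 2 + c * (q.1 * q.2) + d * q.1 + e * q.2) (g := fun _ => f)
      J15 (integrable_const f),
    integral_add (f := fun q : ℝ × ℝ =>
      a * q.1 ^ 2 + b * q.2 ^ 2 + c * (q.1 * q.2) + d * q.1) (g := fun q : ℝ × ℝ => e * q.2)
      J14 I5,
    integral_add (f := fun q : ℝ × ℝ =>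
      a * q.1 ^ 2 + b * q.2 ^ 2 + c * (q.1 * q.2)) (g := fun q : ℝ × ℝ => d * q.1) J13 I4,
    integral_add (f := fun q : ℝ × ℝ => a * q.1 ^ 2 + b * q.2 ^ 2)
      (g := fun q : ℝ × ℝ => c * (q.1 * q.2)) J12 I3,
    integral_add (f := fun q : ℝ × ℝ => a * q.1 ^ 2) (g := fun q : ℝ × ℝ => b * q.2 ^ 2) I1 I2,
    integral_const_mul, integral_const_mul, integral_const_mul, integral_const_mul,
    integral_const_mul, integral_const]
  simp

lemma key (ρ : ℝ) (hρ0 : 0 ≤ ρ) (hρ1 : ρ < 1)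
    (μ₁ μ₂ : ℝ) (α β : NNReal) (hα : 0 < α) (hβ : 0 < β)
    (hα1 : (α : ℝ) + μ₁ ^ 2 = 1) (hβ1 : (β : ℝ) + μ₂ ^ 2 = 1)
    (R : Measure (ℝ × ℝ)) (hR : IsProbabilityMeasure R)
    (h1 : R.map Prod.fst = gaussianReal μ₁ α)
    (h2 : R.map Prod.snd = gaussianReal μ₂ β) :
    (∫ q : ℝ × ℝ,
        Real.log ((2 * Real.pi * Real.sqrt (1 - ρ ^ 2))⁻¹ *
          Real.exp (-(q.1 ^ 2 - 2 * ρ * q.1 * q.2 + q.2 ^ 2) / (2 * (1 - ρ ^ 2))))⁻¹ ∂ R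
      = Real.log (2 * Real.pi * Real.sqrt (1 - ρ ^ 2))
        + (1 - ρ * ∫ q : ℝ × ℝ, q.1 * q.2 ∂ R) / (1 - ρ ^ 2))
    ∧ μ₁ * μ₂ - Real.sqrt α * Real.sqrt β ≤ ∫ q : ℝ × ℝ, q.1 * q.2 ∂ R := by
  have hρsq : 0 < 1 - ρ ^ 2 := by nlinarith
  have hC : 0 < 2 * Real.pi * Real.sqrt (1 - ρ ^ 2) := by
    have := Real.pi_pos
    have := Real.sqrt_pos.mpr hρsq
    positivity
  -- integrabilities
  have hx2 : Integrable (fun q : ℝ × ℝ => q.1 ^ 2) R := by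
    have h := integrable_sq_gaussian μ₁ α
    rw [← h1] at h
    exact (integrable_map_measure (measurable_id'.pow_const 2).aestronglyMeasurable
      measurable_fst.aemeasurable).mp h
  have hy2 : Integrable (fun q : ℝ × ℝ => q.2 ^ 2) R := by
    have h := integrable_sq_gaussian μ₂ β
    rw [← h2] at h
    exact (integrable_map_measure (measurable_id'.pow_const 2).aestronglyMeasurable
      measurable_snd.aemeasurable).mp h
  have hx : Integrable (fun q : ℝ × ℝ => q.1) R := by
    have h := integrable_id_gaussian μ₁ α
    rw [← h1] at h
    exact (integrable_map_measure measurable_id'.aestronglyMeasurable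
      measurable_fst.aemeasurable).mp h
  have hy : Integrable (fun q : ℝ × ℝ => q.2) R := by
    have h := integrable_id_gaussian μ₂ β
    rw [← h2] at h
    exact (integrable_map_measure measurable_id'.aestronglyMeasurable
      measurable_snd.aemeasurable).mp h
  have hxy : Integrable (fun q : ℝ × ℝ => q.1 * q.2) R := by
    have hbint : Integrable (fun q : ℝ × ℝ => (q.1 ^ 2 + q.2 ^ 2) / 2) R := by
      exact (hx2.add hy2).div_const 2
    refine hbint.mono
      ((measurable_fst.mul measurable_snd).aestronglyMeasurable)
      (Filter.Eventually.of_forall fun q => ?_)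
    rw [Real.norm_eq_abs, Real.norm_eq_abs,
      abs_of_nonneg (show (0:ℝ) ≤ (q.1 ^ 2 + q.2 ^ 2) / 2 by positivity)]
    exact abs_le.mpr ⟨by nlinarith [sq_nonneg (q.1 + q.2)], by nlinarith [sq_nonneg (q.1 - q.2)]⟩
  -- moments
  have hX : ∫ q : ℝ × ℝ, q.1 ∂ R = μ₁ := by
    rw [← integral_map measurable_fst.aemeasurable measurable_id'.aestronglyMeasurable, h1,
      integral_id_gaussian]
  have hY : ∫ q : ℝ × ℝ, q.2 ∂ R = μ₂ := by
    rw [← integral_map measurable_snd.aemeasurable measurable_id'.aestronglyMeasurable, h2,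
      integral_id_gaussian]
  have hX2 : ∫ q : ℝ × ℝ, q.1 ^ 2 ∂ R = 1 := by
    rw [← integral_map measurable_fst.aemeasurable
        (measurable_id'.pow_const 2).aestronglyMeasurable, h1, integral_sq_gaussian, hα1]
  have hY2 : ∫ q : ℝ × ℝ, q.2 ^ 2 ∂ R = 1 := by
    rw [← integral_map measurable_snd.aemeasurable
        (measurable_id'.pow_const 2).aestronglyMeasurable, h2, integral_sq_gaussian, hβ1]
  constructor
  · -- value of the integral
    have hpt : ∀ q : ℝ × ℝ,
        Real.log ((2 * Real.pi * Real.sqrt (1 - ρ ^ 2))⁻¹ *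
          Real.exp (-(q.1 ^ 2 - 2 * ρ * q.1 * q.2 + q.2 ^ 2) / (2 * (1 - ρ ^ 2))))⁻¹
        = (2 * (1 - ρ ^ 2))⁻¹ * q.1 ^ 2 + (2 * (1 - ρ ^ 2))⁻¹ * q.2 ^ 2
          + (-(2 * ρ * (2 * (1 - ρ ^ 2))⁻¹)) * (q.1 * q.2) + 0 * q.1 + 0 * q.2
          + Real.log (2 * Real.pi * Real.sqrt (1 - ρ ^ 2)) := by
      intro q
      rw [mul_inv, inv_inv, ← Real.exp_neg,
        Real.log_mul hC.ne' (Real.exp_ne_zero _), Real.log_exp]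
      ring
    rw [integral_congr_ae (Filter.Eventually.of_forall hpt),
      integral_quad R hx2 hy2 hxy hx hy _ _ _ _ _ _, hX2, hY2, hX, hY]
    have hne : (1 - ρ ^ 2) ≠ 0 := hρsq.ne'
    field_simp
    ring
  · -- Cauchy–Schwarz lower bound on the cross moment
    set K := ∫ q : ℝ × ℝ, q.1 * q.2 ∂ R with hK
    have hsA : Real.sqrt α ^ 2 = (α : ℝ) := Real.sq_sqrt α.coe_nonneg
    have hsB : Real.sqrt β ^ 2 = (β : ℝ) := Real.sq_sqrt β.coe_nonneg
    have hsApos : 0 < Real.sqrt α := Real.sqrt_pos.mpr (by exact_mod_cast hα)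
    have hsBpos : 0 < Real.sqrt β := Real.sqrt_pos.mpr (by exact_mod_cast hβ)
    set sA := Real.sqrt α
    set sB := Real.sqrt β
    have h0 : (0:ℝ) ≤ ∫ q : ℝ × ℝ, (sB * (q.1 - μ₁) + sA * (q.2 - μ₂)) ^ 2 ∂ R :=
      integral_nonneg fun q => sq_nonneg _
    have heq : ∫ q : ℝ × ℝ, (sB * (q.1 - μ₁) + sA * (q.2 - μ₂)) ^ 2 ∂ R
        = ∫ q : ℝ × ℝ, (sB ^ 2 * q.1 ^ 2 + sA ^ 2 * q.2 ^ 2 + (2 * sA * sB) * (q.1 * q.2)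
            + (-(2 * sB ^ 2 * μ₁) - 2 * sA * sB * μ₂) * q.1
            + (-(2 * sA ^ 2 * μ₂) - 2 * sA * sB * μ₁) * q.2
            + (sB ^ 2 * μ₁ ^ 2 + sA ^ 2 * μ₂ ^ 2 + 2 * sA * sB * μ₁ * μ₂)) ∂ R :=
      integral_congr_ae (Filter.Eventually.of_forall fun q => by ring)
    rw [heq, integral_quad R hx2 hy2 hxy hx hy _ _ _ _ _ _, hX2, hY2, hX, hY, ← hK] at h0
    nlinarith [mul_pos hsApos hsBpos, hα1, hβ1, hsA, hsB]

end Stmt7Aux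

open Stmt7Aux in
/-- the maximum over couplings `R` of two Gaussians (with unit second
moments) of `∫ log(1/π_ρ(x,y)) dR` equals
`log(2π√(1−ρ²)) + (1 + ρ(√(αβ) − μ₁μ₂))/(1−ρ²)`, and it is attained. -/
theorem stmt_7 (ρ : ℝ) (hρ0 : 0 ≤ ρ) (hρ1 : ρ < 1)
    (μ₁ μ₂ : ℝ) (α β : NNReal) (hα : 0 < α) (hβ : 0 < β)
    (hα1 : (α : ℝ) + μ₁ ^ 2 = 1) (hβ1 : (β : ℝ) + μ₂ ^ 2 = 1) :
    IsGreatest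
      {v : ℝ | ∃ R : Measure (ℝ × ℝ), IsProbabilityMeasure R ∧
        R.map Prod.fst = gaussianReal μ₁ α ∧
        R.map Prod.snd = gaussianReal μ₂ β ∧
        v = ∫ q : ℝ × ℝ,
          Real.log ((2 * Real.pi * Real.sqrt (1 - ρ ^ 2))⁻¹ *
            Real.exp (-(q.1 ^ 2 - 2 * ρ * q.1 * q.2 + q.2 ^ 2) / (2 * (1 - ρ ^ 2))))⁻¹ ∂ R}
      (Real.log (2 * Real.pi * Real.sqrt (1 - ρ ^ 2)) +
        (1 + ρ * (Real.sqrt ((α : ℝ) * (β : ℝ)) - μ₁ * μ₂)) / (1 - ρ ^ 2)) := by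
  have hρsq : 0 < 1 - ρ ^ 2 := by nlinarith
  constructor
  · -- the value is attained by the antithetic coupling
    have hTm : Measurable (fun x : ℝ =>
        ((μ₁ + Real.sqrt α * x, μ₂ + (-Real.sqrt β) * x) : ℝ × ℝ)) :=
      (meas_affine _ _).prodMk (meas_affine _ _)
    haveI hPM : IsProbabilityMeasure ((gaussianReal 0 1).map (fun x : ℝ =>
        ((μ₁ + Real.sqrt α * x, μ₂ + (-Real.sqrt β) * x) : ℝ × ℝ))) :=
      Measure.isProbabilityMeasure_map hTm.aemeasurable
    have hfst : ((gaussianReal 0 1).map (fun x : ℝ =>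
        ((μ₁ + Real.sqrt α * x, μ₂ + (-Real.sqrt β) * x) : ℝ × ℝ))).map Prod.fst
        = gaussianReal μ₁ α := by
      rw [Measure.map_map measurable_fst hTm]
      exact map_std (Real.sqrt α) μ₁ α (Real.sq_sqrt α.coe_nonneg)
    have hsnd : ((gaussianReal 0 1).map (fun x : ℝ =>
        ((μ₁ + Real.sqrt α * x, μ₂ + (-Real.sqrt β) * x) : ℝ × ℝ))).map Prod.snd
        = gaussianReal μ₂ β := by
      rw [Measure.map_map measurable_snd hTm]
      refine map_std (-Real.sqrt β) μ₂ β ?_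
      rw [neg_sq]; exact Real.sq_sqrt β.coe_nonneg
    obtain ⟨hval, -⟩ := key ρ hρ0 hρ1 μ₁ μ₂ α β hα hβ hα1 hβ1 _ hPM hfst hsnd
    have hK : ∫ q : ℝ × ℝ, q.1 * q.2 ∂((gaussianReal 0 1).map (fun x : ℝ =>
        ((μ₁ + Real.sqrt α * x, μ₂ + (-Real.sqrt β) * x) : ℝ × ℝ)))
        = μ₁ * μ₂ - Real.sqrt α * Real.sqrt β := by
      rw [integral_map hTm.aemeasurable (f := fun q : ℝ × ℝ => q.1 * q.2)
        (measurable_fst.mul measurable_snd).aestronglyMeasurable]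
      have hpoly : ∫ x, ((-(Real.sqrt α * Real.sqrt β)) * x ^ 2
          + (μ₁ * (-Real.sqrt β) + μ₂ * Real.sqrt α) * x + μ₁ * μ₂) ∂(gaussianReal 0 1)
          = μ₁ * μ₂ - Real.sqrt α * Real.sqrt β := by
        rw [integral_poly2_std]; ring
      rw [← hpoly]
      refine integral_congr_ae (Filter.Eventually.of_forall fun x => ?_)
      show (μ₁ + Real.sqrt α * x) * (μ₂ + (-Real.sqrt β) * x) = _
      ring
    refine ⟨_, hPM, hfst, hsnd, ?_⟩
    rw [hval, hK, Real.sqrt_mul α.coe_nonneg]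
    ring
  · -- upper bound over all couplings
    rintro v ⟨R, hR, h1, h2, rfl⟩
    obtain ⟨hval, hKge⟩ := key ρ hρ0 hρ1 μ₁ μ₂ α β hα hβ hα1 hβ1 R hR h1 h2
    rw [hval, Real.sqrt_mul α.coe_nonneg]
    refine add_le_add (le_refl _) ?_
    rw [div_le_div_iff_of_pos_right hρsq]
    nlinarith [mul_le_mul_of_nonneg_left hKge hρ0]
end

section
/- Let 𝒲, 𝒳, 𝒴 be finite sets, let π be a pmf on 𝒳 × 𝒴, let P_W be a pmf on 𝒲, and for each w ∈ 𝒲 let P_{X|W=w} be a pmf on 𝒳 and P_{Y|W=w} a pmf on 𝒴. Then for every coupling Q ∈ C(P_W, P_W), Σ_{(w,w')} Q(w,w')·𝓗(P_{X|W=w}, P_{Y|W=w'} ‖ π) ≥ Σ_w P_W(w)·H(P_{X|W=w}) + Σ_w P_W(w)·H(P_{Y|W=w}), where the left-hand sum is taken in the extended reals. (In particular, the quantity Γ := −Σ_w P_W(w)[H(P_{X|W=w}) + H(P_{Y|W=w})] + min_{Q ∈ C(P_W,P_W)} Σ_{(w,w')} Q(w,w')·𝓗(P_{X|W=w}, P_{Y|W=w'}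 ‖ π) is nonnegative.) -/
open scoped BigOperators

lemma coe_mul_le_ereal {c a : ℝ} (hc : 0 ≤ c) {b : EReal} (h : (a : EReal) ≤ b) :
    ((c * a : ℝ) : EReal) ≤ (c : EReal) * b := by
  induction b using EReal.rec with
  | bot => exact absurd h (by simp)
  | coe b =>
    rw [← EReal.coe_mul]
    exact_mod_cast mul_le_mul_of_nonneg_left (by exact_mod_cast h) hc
  | top =>
    rcases eq_or_lt_of_le hc with hc0 | hc0
    · simp [← hc0]
    · rw [EReal.coe_mul_top_of_pos hc0]; exact le_top

/-- Gibbs inequality, real version. -/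
lemma gibbs_s9 {Z : Type*} [Fintype Z] (R p : Z → ℝ) (hR0 : ∀ z, 0 ≤ R z)
    (hR1 : ∑ z, R z = 1) (hp0 : ∀ z, 0 ≤ p z) (hp1 : ∑ z, p z ≤ 1)
    (habs : ∀ z, R z ≠ 0 → p z ≠ 0) :
    ∑ z, R z * Real.log (R z)⁻¹ ≤ ∑ z, R z * Real.log (p z)⁻¹ := by
  have key : ∀ z, R z * Real.log (R z)⁻¹ - R z * Real.log (p z)⁻¹ ≤ p z - R z := by
    intro z
    rcases eq_or_lt_of_le (hR0 z) with h0 | h0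
    · simp [← h0, hp0 z]
    · have hpz : 0 < p z := lt_of_le_of_ne (hp0 z) (Ne.symm (habs z (ne_of_gt h0)))
      have : Real.log (R z)⁻¹ - Real.log (p z)⁻¹ = Real.log (p z / R z) := by
        rw [Real.log_inv, Real.log_inv, Real.log_div (ne_of_gt hpz) (ne_of_gt h0)]
        ring
      have hlog : Real.log (p z / R z) ≤ p z / R z - 1 :=
        Real.log_le_sub_one_of_pos (div_pos hpz h0)
      calc R z * Real.log (R z)⁻¹ - R z * Real.log (p z)⁻¹
          = R z * Real.log (p z / R z) := by rw [← mul_sub, this]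
        _ ≤ R z * (p z / R z - 1) := mul_le_mul_of_nonneg_left hlog (hR0 z)
        _ = p z - R z := by field_simp
  have h2 : ∑ z, (R z * Real.log (R z)⁻¹ - R z * Real.log (p z)⁻¹) ≤ ∑ z, (p z - R z) :=
    Finset.sum_le_sum (fun z _ => key z)
  simp only [Finset.sum_sub_distrib] at h2
  linarith

lemma coe_sum_ereal_s9 {Z : Type*} [Fintype Z] (f : Z → ℝ) :
    ((∑ z, f z : ℝ) : EReal) = ∑ z, ((f z : ℝ) : EReal) :=
  map_sum (⟨⟨(fun x : ℝ => (x : EReal)), EReal.coe_zero⟩,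
    fun x y => EReal.coe_add x y⟩ : ℝ →+ EReal) f Finset.univ

lemma crossent_ge_entropy {Z : Type*} [Fintype Z] (R p : Z → ℝ) (hR0 : ∀ z, 0 ≤ R z)
    (hR1 : ∑ z, R z = 1) (hp0 : ∀ z, 0 ≤ p z) (hp1 : ∑ z, p z = 1) :
    ((∑ z, R z * Real.log (R z)⁻¹ : ℝ) : EReal) ≤ ∑ z, (R z : EReal) * negLogE (p z) := by
  have hple : ∀ z, p z ≤ 1 := by
    intro z
    rw [← hp1]
    exact Finset.single_le_sum (fun i _ => hp0 i) (Finset.mem_univ z)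
  have hnl : ∀ z, (0 : EReal) ≤ negLogE (p z) := by
    intro z
    rw [negLogE]
    split
    · exact le_top
    · rw [← EReal.coe_zero, EReal.coe_le_coe_iff, Real.log_inv]
      exact neg_nonneg.mpr (Real.log_nonpos (hp0 z) (hple z))
  have hterm0 : ∀ z, (0 : EReal) ≤ (R z : EReal) * negLogE (p z) := fun z =>
    mul_nonneg (by exact_mod_cast hR0 z) (hnl z)
  by_cases hex : ∃ z, R z ≠ 0 ∧ p z = 0
  · obtain ⟨z0, hz1, hz2⟩ := hex
    have htop : (R z0 : EReal) * negLogE (p z0) = ⊤ := by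
      rw [negLogE, if_pos hz2, EReal.coe_mul_top_of_pos (lt_of_le_of_ne (hR0 z0) (Ne.symm hz1))]
    have : (⊤ : EReal) ≤ ∑ z, (R z : EReal) * negLogE (p z) := by
      rw [← htop]
      exact Finset.single_le_sum (fun z _ => hterm0 z) (Finset.mem_univ z0)
    exact le_trans le_top this
  · push_neg at hex
    have hsum : ∑ z, (R z : EReal) * negLogE (p z)
        = ((∑ z, R z * Real.log (p z)⁻¹ : ℝ) : EReal) := by
      rw [coe_sum_ereal_s9]
      refine Finset.sum_congr rfl fun z _ => ?_
      by_cases hz : R z = 0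
      · simp [hz]
      · rw [negLogE, if_neg (hex z hz), ← EReal.coe_mul]
    rw [hsum, EReal.coe_le_coe_iff]
    exact gibbs_s9 R p hR0 hR1 hp0 (le_of_eq hp1) hex

lemma prod_entropy {X Y : Type*} [Fintype X] [Fintype Y] (a : X → ℝ) (b : Y → ℝ)
    (ha1 : ∑ x, a x = 1) (hb1 : ∑ y, b y = 1) :
    ∑ q : X × Y, (a q.1 * b q.2) * Real.log (a q.1 * b q.2)⁻¹
      = (∑ x, a x * Real.log (a x)⁻¹) + ∑ y, b y * Real.log (b y)⁻¹ := by
  have key : ∀ (x : X) (y : Y), (a x * b y) * Real.log (a x * b y)⁻¹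
      = b y * (a x * Real.log (a x)⁻¹) + a x * (b y * Real.log (b y)⁻¹) := by
    intro x y
    by_cases hx : a x = 0
    · simp [hx]
    by_cases hy : b y = 0
    · simp [hy]
    rw [mul_inv, Real.log_mul (inv_ne_zero hx) (inv_ne_zero hy)]
    ring
  rw [Fintype.sum_prod_type]
  simp only [key, Finset.sum_add_distrib, ← Finset.sum_mul, ← Finset.mul_sum, hb1, ha1,
    one_mul, mul_one]

lemma maxCrossEnt_ge_entropies {X Y : Type*} [Fintype X] [Fintype Y]
    (π : X × Y → ℝ) (hπ0 : ∀ p, 0 ≤ π p) (hπ1 : ∑ p, π p = 1)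
    (a : X → ℝ) (ha0 : ∀ x, 0 ≤ a x) (ha1 : ∑ x, a x = 1)
    (b : Y → ℝ) (hb0 : ∀ y, 0 ≤ b y) (hb1 : ∑ y, b y = 1) :
    ((entropy a + entropy b : ℝ) : EReal) ≤ maxCrossEnt a b π := by
  set Q0 : X × Y → ℝ := fun q => a q.1 * b q.2 with hQ0def
  have hQ0coup : IsCoupling a b Q0 := by
    refine ⟨fun q => mul_nonneg (ha0 q.1) (hb0 q.2), fun x => ?_, fun y => ?_⟩
    · simp only [hQ0def]
      rw [← Finset.mul_sum, hb1, mul_one]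
    · simp only [hQ0def]
      rw [← Finset.sum_mul, ha1, one_mul]
  have hQ01 : ∑ q : X × Y, Q0 q = 1 := by
    rw [Fintype.sum_prod_type]
    simp only [hQ0def, ← Finset.mul_sum, hb1, mul_one, ha1]
  have hmem : (∑ q : X × Y, (Q0 q : EReal) * negLogE (π q)) ∈
      {s : EReal | ∃ Q, IsCoupling a b Q ∧
        s = ∑ p : X × Y, (Q p : EReal) * negLogE (π p)} := ⟨Q0, hQ0coup, rfl⟩
  have hle := le_sSup hmem
  refine le_trans ?_ hle
  have := crossent_ge_entropy Q0 π (fun q => mul_nonneg (ha0 q.1) (hb0 q.2)) hQ01 hπ0 hπ1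
  rwa [show ∑ q : X × Y, Q0 q * Real.log (Q0 q)⁻¹ = entropy a + entropy b from
    prod_entropy a b ha1 hb1] at this

/-- for every coupling `Q` of `(P_W, P_W)`,
`∑_{(w,w')} Q(w,w') 𝓗(P_{X|W=w}, P_{Y|W=w'} ‖ π)
  ≥ ∑_w P_W(w) H(P_{X|W=w}) + ∑_w P_W(w) H(P_{Y|W=w})`. -/
theorem stmt_9 {W X Y : Type*} [Fintype W] [Fintype X] [Fintype Y]
    (π : X × Y → ℝ) (hπ0 : ∀ p, 0 ≤ π p) (hπ1 : ∑ p, π p = 1)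
    (PW : W → ℝ) (hPW0 : ∀ w, 0 ≤ PW w) (hPW1 : ∑ w, PW w = 1)
    (PX : W → X → ℝ) (hPX0 : ∀ w x, 0 ≤ PX w x) (hPX1 : ∀ w, ∑ x, PX w x = 1)
    (PY : W → Y → ℝ) (hPY0 : ∀ w y, 0 ≤ PY w y) (hPY1 : ∀ w, ∑ y, PY w y = 1)
    (Q : W × W → ℝ) (hQ : IsCoupling PW PW Q) :
    ((∑ w, PW w * entropy (PX w) + ∑ w, PW w * entropy (PY w) : ℝ) : EReal)
      ≤ ∑ q : W × W, (Q q : EReal) * maxCrossEnt (PX q.1) (PY q.2) π := by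
  obtain ⟨hQ0, hQ1, hQ2⟩ := hQ
  have step : ∀ q : W × W,
      ((Q q * (entropy (PX q.1) + entropy (PY q.2)) : ℝ) : EReal)
        ≤ (Q q : EReal) * maxCrossEnt (PX q.1) (PY q.2) π := fun q =>
    coe_mul_le_ereal (hQ0 q)
      (maxCrossEnt_ge_entropies π hπ0 hπ1 (PX q.1) (hPX0 q.1) (hPX1 q.1)
        (PY q.2) (hPY0 q.2) (hPY1 q.2))
  have hsum : ((∑ q : W × W, Q q * (entropy (PX q.1) + entropy (PY q.2)) : ℝ) : EReal)
      ≤ ∑ q : W × W, (Q q : EReal) * maxCrossEnt (PX q.1) (PY q.2) π := by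
    rw [coe_sum_ereal_s9]
    exact Finset.sum_le_sum fun q _ => step q
  refine le_trans (le_of_eq ?_) hsum
  rw [EReal.coe_eq_coe_iff]
  have hreal : ∑ q : W × W, Q q * (entropy (PX q.1) + entropy (PY q.2))
      = ∑ w, PW w * entropy (PX w) + ∑ w, PW w * entropy (PY w) := by
    rw [Fintype.sum_prod_type]
    have : ∀ w : W, ∑ w' : W, Q (w, w') * (entropy (PX w) + entropy (PY w'))
        = PW w * entropy (PX w) + ∑ w' : W, Q (w, w') * entropy (PY w') := by
      intro w
      simp only [mul_add, Finset.sum_add_distrib, ← Finset.sum_mul, hQ1 w]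
    simp only [this, Finset.sum_add_distrib]
    congr 1
    rw [Finset.sum_comm]
    refine Finset.sum_congr rfl fun w' _ => ?_
    rw [← Finset.sum_mul, hQ2 w']
  rw [hreal]
end

section
/- Let (Ω, 𝔽, μ) be a probability space, let p ∈ [0, 1/2], and let α, β : Ω → [0,1] be measurable functions with E[α] = 1/2, E[β] = 1/2, and E[α·β] = (1−p)/2. Define a := 1/2 − √(E[(α − 1/2)²]) and b := 1/2 − √(E[(β − 1/2)²]). Then a ∈ [0, 1/2], b ∈ [0, 1/2], and a(1−b) + (1−a)b ≤ p. -/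
open MeasureTheory

lemma cauchy_schwarz_int {Ω : Type*} [MeasurableSpace Ω] (μ : Measure Ω) [IsProbabilityMeasure μ]
    (f g : Ω → ℝ) (hfm : Measurable f) (hgm : Measurable g)
    (hf : ∀ ω, |f ω| ≤ 1/2) (hg : ∀ ω, |g ω| ≤ 1/2) :
    ∫ ω, f ω * g ω ∂μ ≤ Real.sqrt (∫ ω, (f ω)^2 ∂μ) * Real.sqrt (∫ ω, (g ω)^2 ∂μ) := by
  have hfL : MemLp f (ENNReal.ofReal 2) μ :=
    MemLp.of_bound hfm.aestronglyMeasurable (1/2) (Filter.Eventually.of_forall fun ω => hf ω)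
  have hgL : MemLp g (ENNReal.ofReal 2) μ :=
    MemLp.of_bound hgm.aestronglyMeasurable (1/2) (Filter.Eventually.of_forall fun ω => hg ω)
  have hconj : Real.HolderConjugate 2 2 := ⟨by norm_num, by norm_num, by norm_num⟩
  have key := integral_mul_norm_le_Lp_mul_Lq (μ := μ) (f := f) (g := g) hconj hfL hgL
  have hnormint : Integrable (fun ω => ‖f ω‖ * ‖g ω‖) μ := by
    apply Integrable.mono' (integrable_const ((1:ℝ)/2 * (1/2)))
      ((hfm.norm.mul hgm.norm).aestronglyMeasurable)
    refine Filter.Eventually.of_forall fun ω => ?_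
    rw [Pi.mul_apply, norm_mul, norm_norm, norm_norm]
    exact mul_le_mul (hf ω) (hg ω) (norm_nonneg _) (by norm_num)
  have hfgint : Integrable (fun ω => f ω * g ω) μ := by
    apply Integrable.mono' (integrable_const ((1:ℝ)/2 * (1/2)))
      ((hfm.mul hgm).aestronglyMeasurable)
    refine Filter.Eventually.of_forall fun ω => ?_
    rw [Real.norm_eq_abs, Pi.mul_apply, abs_mul]
    exact mul_le_mul (hf ω) (hg ω) (abs_nonneg _) (by norm_num)
  have h1 : ∫ ω, f ω * g ω ∂μ ≤ ∫ ω, ‖f ω‖ * ‖g ω‖ ∂μ := by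
    refine integral_mono hfgint hnormint fun ω => ?_
    calc f ω * g ω ≤ |f ω * g ω| := le_abs_self _
      _ = ‖f ω‖ * ‖g ω‖ := by rw [abs_mul]; rfl
  have h2 : (∫ ω, ‖f ω‖ ^ (2:ℝ) ∂μ) = ∫ ω, (f ω)^2 ∂μ :=
    integral_congr_ae (Filter.Eventually.of_forall fun ω => by
      show ‖f ω‖ ^ (2:ℝ) = (f ω)^2
      rw [Real.rpow_two, Real.norm_eq_abs, sq_abs])
  have h3 : (∫ ω, ‖g ω‖ ^ (2:ℝ) ∂μ) = ∫ ω, (g ω)^2 ∂μ :=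
    integral_congr_ae (Filter.Eventually.of_forall fun ω => by
      show ‖g ω‖ ^ (2:ℝ) = (g ω)^2
      rw [Real.rpow_two, Real.norm_eq_abs, sq_abs])
  rw [h2, h3] at key
  calc ∫ ω, f ω * g ω ∂μ ≤ ∫ ω, ‖f ω‖ * ‖g ω‖ ∂μ := h1
    _ ≤ (∫ ω, (f ω)^2 ∂μ) ^ ((1:ℝ)/2) * (∫ ω, (g ω)^2 ∂μ) ^ ((1:ℝ)/2) := key
    _ = _ := by
        rw [Real.sqrt_eq_rpow, Real.sqrt_eq_rpow]

/-- converse step for the DSBS. If `E[α] = E[β] = 1/2` and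
`E[αβ] = (1−p)/2` with `α, β` taking values in `[0,1]` and `p ∈ [0, 1/2]`, then
`a := 1/2 − √E[(α−1/2)²]` and `b := 1/2 − √E[(β−1/2)²]` lie in `[0, 1/2]` and
satisfy `a(1−b) + (1−a)b ≤ p`. -/
theorem stmt_11 {Ω : Type*} [MeasurableSpace Ω] (μ : Measure Ω) [IsProbabilityMeasure μ]
    (p : ℝ) (hp : p ∈ Set.Icc (0 : ℝ) (1 / 2))
    (α β : Ω → ℝ) (hαm : Measurable α) (hβm : Measurable β)
    (hα01 : ∀ ω, α ω ∈ Set.Icc (0 : ℝ) 1) (hβ01 : ∀ ω, β ω ∈ Set.Icc (0 : ℝ) 1)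
    (hEα : ∫ ω, α ω ∂μ = 1 / 2) (hEβ : ∫ ω, β ω ∂μ = 1 / 2)
    (hEαβ : ∫ ω, α ω * β ω ∂μ = (1 - p) / 2) :
    (1 / 2 - Real.sqrt (∫ ω, (α ω - 1 / 2) ^ 2 ∂μ)) ∈ Set.Icc (0 : ℝ) (1 / 2) ∧
    (1 / 2 - Real.sqrt (∫ ω, (β ω - 1 / 2) ^ 2 ∂μ)) ∈ Set.Icc (0 : ℝ) (1 / 2) ∧
    (1 / 2 - Real.sqrt (∫ ω, (α ω - 1 / 2) ^ 2 ∂μ)) *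
        (1 - (1 / 2 - Real.sqrt (∫ ω, (β ω - 1 / 2) ^ 2 ∂μ))) +
      (1 - (1 / 2 - Real.sqrt (∫ ω, (α ω - 1 / 2) ^ 2 ∂μ))) *
        (1 / 2 - Real.sqrt (∫ ω, (β ω - 1 / 2) ^ 2 ∂μ)) ≤ p := by
  set f : Ω → ℝ := fun ω => α ω - 1/2 with hf_def
  set g : Ω → ℝ := fun ω => β ω - 1/2 with hg_def
  have hfm : Measurable f := hαm.sub measurable_const
  have hgm : Measurable g := hβm.sub measurable_const
  have hfb : ∀ ω, |f ω| ≤ 1/2 := fun ω => abs_le.mpr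
    ⟨by have h1 := (hα01 ω).1; simp only [hf_def]; linarith,
     by have h2 := (hα01 ω).2; simp only [hf_def]; linarith⟩
  have hgb : ∀ ω, |g ω| ≤ 1/2 := fun ω => abs_le.mpr
    ⟨by have h1 := (hβ01 ω).1; simp only [hg_def]; linarith,
     by have h2 := (hβ01 ω).2; simp only [hg_def]; linarith⟩
  -- integrability
  have intbd : ∀ (h : Ω → ℝ), Measurable h → (∀ ω, |h ω| ≤ 1) → Integrable h μ := by
    intro h hm hb
    exact Integrable.mono' (integrable_const 1) hm.aestronglyMeasurable
      (Filter.Eventually.of_forall fun ω => hb ω)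
  have hαi : Integrable α μ := intbd α hαm fun ω =>
    abs_le.mpr ⟨by linarith [(hα01 ω).1], (hα01 ω).2⟩
  have hβi : Integrable β μ := intbd β hβm fun ω =>
    abs_le.mpr ⟨by linarith [(hβ01 ω).1], (hβ01 ω).2⟩
  have hαβi : Integrable (fun ω => α ω * β ω) μ := intbd _ (hαm.mul hβm) fun ω => by
    rw [abs_mul]
    calc |α ω| * |β ω| ≤ 1 * 1 :=
          mul_le_mul (abs_le.mpr ⟨by linarith [(hα01 ω).1], (hα01 ω).2⟩)
            (abs_le.mpr ⟨by linarith [(hβ01 ω).1], (hβ01 ω).2⟩) (abs_nonneg _) zero_le_one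
      _ = 1 := one_mul 1
  -- compute ∫ f g
  have hI1 : Integrable (fun ω => α ω * β ω - 1/2 * α ω) μ := hαβi.sub (hαi.const_mul _)
  have hI2 : Integrable (fun ω => α ω * β ω - 1/2 * α ω - 1/2 * β ω) μ := hI1.sub (hβi.const_mul _)
  have hfg : ∫ ω, f ω * g ω ∂μ = (1 - 2*p)/4 := by
    have hpt : ∀ ω, f ω * g ω = α ω * β ω - (1/2) * α ω - (1/2) * β ω + 1/4 := by
      intro ω; simp only [hf_def, hg_def]; ring
    rw [integral_congr_ae (Filter.Eventually.of_forall hpt),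
      integral_add hI2 (integrable_const _),
      integral_sub hI1 (hβi.const_mul _),
      integral_sub hαβi (hαi.const_mul _), integral_const_mul, integral_const_mul,
      hEα, hEβ, hEαβ, integral_const]
    simp
    ring
  -- variance bounds
  have hvf : ∫ ω, (f ω)^2 ∂μ ≤ 1/4 := by
    calc ∫ ω, (f ω)^2 ∂μ ≤ ∫ _ω, (1:ℝ)/4 ∂μ := by
          apply integral_mono_of_nonneg (Filter.Eventually.of_forall fun ω => sq_nonneg _)
            (integrable_const _) (Filter.Eventually.of_forall fun ω => ?_)
          calc (f ω)^2 = |f ω|^2 := (sq_abs _).symm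
            _ ≤ (1/2)^2 := by apply pow_le_pow_left₀ (abs_nonneg _) (hfb ω)
            _ = 1/4 := by norm_num
      _ = 1/4 := by simp
  have hvg : ∫ ω, (g ω)^2 ∂μ ≤ 1/4 := by
    calc ∫ ω, (g ω)^2 ∂μ ≤ ∫ _ω, (1:ℝ)/4 ∂μ := by
          apply integral_mono_of_nonneg (Filter.Eventually.of_forall fun ω => sq_nonneg _)
            (integrable_const _) (Filter.Eventually.of_forall fun ω => ?_)
          calc (g ω)^2 = |g ω|^2 := (sq_abs _).symm
            _ ≤ (1/2)^2 := by apply pow_le_pow_left₀ (abs_nonneg _) (hgb ω)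
            _ = 1/4 := by norm_num
      _ = 1/4 := by simp
  have hsf : Real.sqrt (∫ ω, (f ω)^2 ∂μ) ≤ 1/2 := by
    calc Real.sqrt (∫ ω, (f ω)^2 ∂μ) ≤ Real.sqrt (1/4) := Real.sqrt_le_sqrt hvf
      _ = 1/2 := by rw [show (1:ℝ)/4 = (1/2)^2 by norm_num, Real.sqrt_sq (by norm_num)]
  have hsg : Real.sqrt (∫ ω, (g ω)^2 ∂μ) ≤ 1/2 := by
    calc Real.sqrt (∫ ω, (g ω)^2 ∂μ) ≤ Real.sqrt (1/4) := Real.sqrt_le_sqrt hvg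
      _ = 1/2 := by rw [show (1:ℝ)/4 = (1/2)^2 by norm_num, Real.sqrt_sq (by norm_num)]
  have hCS := cauchy_schwarz_int μ f g hfm hgm hfb hgb
  rw [hfg] at hCS
  have hsf0 : 0 ≤ Real.sqrt (∫ ω, (f ω)^2 ∂μ) := Real.sqrt_nonneg _
  have hsg0 : 0 ≤ Real.sqrt (∫ ω, (g ω)^2 ∂μ) := Real.sqrt_nonneg _
  have heq1 : (∫ ω, (α ω - 1 / 2) ^ 2 ∂μ) = ∫ ω, (f ω)^2 ∂μ := rfl
  have heq2 : (∫ ω, (β ω - 1 / 2) ^ 2 ∂μ) = ∫ ω, (g ω)^2 ∂μ := rfl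
  rw [heq1, heq2]
  refine ⟨⟨by linarith, by linarith⟩, ⟨by linarith, by linarith⟩, ?_⟩
  nlinarith [hCS]
end
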